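/- arXiv:0912.0328 — 7 statements merged into one kernel-verified Lean document; each statement's English description precedes it below -/
import Mathlib

section
/- The time-like graph G with vertices t_j = j/7 for j = 0, 1, ..., 7 and edge set {E_{01}, E_{12}, E_{13}, E_{24}, E_{25}, E_{34}, E_{35}, E_{46}, E_{56}, E_{67}} is not an NCC-graph; in particular, the cells (sigma(3,4,6), sigma(3,5,6)) and (sigma(2,5,6), sigma(2,4,6)) form a pair of minimal co-terminal cells in G. -/
/-- A time-like graph (TLG): vertices `t 0 ≤ t 1 ≤ ⋯ ≤ t N` (formally distinct, labeled by
reals, `t 0 = 0`, `t N = 1`, interior labels in `(0,1)`), and a set of directed edges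
(at most two parallel edges between a pair of vertices, encoded by the `Fin 2` copy index),
each edge strictly increasing in label; the extreme vertices have degree `1` and every
other vertex has degree `3`, with at least one incoming and one outgoing edge. -/
structure TLG where
  N : ℕ
  hN : 1 ≤ N
  t : Fin (N + 1) → ℝ
  ht0 : t 0 = 0
  htN : t (Fin.last N) = 1
  hmono : Monotone t
  hint : ∀ k : Fin (N + 1), k ≠ 0 → k ≠ Fin.last N → 0 < t k ∧ t k < 1
  edges : Finset ((Fin (N + 1) × Fin (N + 1)) × Fin 2)
  hedge : ∀ e ∈ edges, t e.1.1 < t e.1.2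
  hdeg : ∀ v : Fin (N + 1),
      (edges.filter fun e => e.1.1 = v ∨ e.1.2 = v).card =
        if v = 0 ∨ v = Fin.last N then 1 else 3
  hio : ∀ v : Fin (N + 1), v ≠ 0 → v ≠ Fin.last N →
      (∃ e ∈ edges, e.1.2 = v) ∧ (∃ e ∈ edges, e.1.1 = v)

namespace TLG

variable (G : TLG)

/-- The type of (potential) edges of `G`: an ordered pair of vertices together with a copy
index distinguishing parallel edges. -/
abbrev Edge := (Fin (G.N + 1) × Fin (G.N + 1)) × Fin 2

/-- A time path: a nonempty list of edges of `G` in which the end vertex of each edge is the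
start vertex of the next one.  (Vertices along it are automatically strictly increasing.) -/
def IsTimePath (l : List G.Edge) : Prop :=
  l ≠ [] ∧ (∀ e ∈ l, e ∈ G.edges) ∧ l.Chain' fun e f => e.1.2 = f.1.1

/-- The first vertex of a path. -/
def pathStart (l : List G.Edge) : Option (Fin (G.N + 1)) := l.head?.map fun e => e.1.1

/-- The last vertex of a path. -/
def pathEnd (l : List G.Edge) : Option (Fin (G.N + 1)) := l.getLast?.map fun e => e.1.2

/-- A full time path goes from the initial vertex `t 0` to the terminal vertex `t N`. -/
def IsFullTimePath (l : List G.Edge) : Prop :=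
  G.IsTimePath l ∧ G.pathStart l = some 0 ∧ G.pathEnd l = some (Fin.last G.N)

/-- The interior vertices of a time path: the start vertices of all edges after the first. -/
def interior (l : List G.Edge) : Set (Fin (G.N + 1)) := {v | ∃ e ∈ l.tail, e.1.1 = v}

/-- A cell with start `j` and end `k`: a pair of distinct co-terminal time paths whose sets
of interior vertices are disjoint. -/
def IsCell (j k : Fin (G.N + 1)) (σ₁ σ₂ : List G.Edge) : Prop :=
  G.IsTimePath σ₁ ∧ G.IsTimePath σ₂ ∧ σ₁ ≠ σ₂ ∧
    G.pathStart σ₁ = some j ∧ G.pathStart σ₂ = some j ∧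
    G.pathEnd σ₁ = some k ∧ G.pathEnd σ₂ = some k ∧
    ∀ v, v ∈ G.interior σ₁ → v ∉ G.interior σ₂

/-- A cell is forward-minimal if its end has the smallest time label among the ends of all
cells with the same start. -/
def IsForwardMinimal (j k : Fin (G.N + 1)) (σ₁ σ₂ : List G.Edge) : Prop :=
  G.IsCell j k σ₁ σ₂ ∧ ∀ k' σ₁' σ₂', G.IsCell j k' σ₁' σ₂' → G.t k ≤ G.t k'

/-- A cell is backward-minimal if its start has the largest time label among the starts of
all cells with the same end. -/
def IsBackwardMinimal (j k : Fin (G.N + 1)) (σ₁ σ₂ : List G.Edge) : Prop :=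
  G.IsCell j k σ₁ σ₂ ∧ ∀ j' σ₁' σ₂', G.IsCell j' k σ₁' σ₂' → G.t j' ≤ G.t j

/-- `G` has a pair of minimal co-terminal cells: either two forward-minimal cells with
different starts and the same end, or two backward-minimal cells with the same start and
different ends. -/
def HasMinimalCoTerminalCells : Prop :=
  (∃ j j' k σ₁ σ₂ σ₁' σ₂', j ≠ j' ∧
      G.IsForwardMinimal j k σ₁ σ₂ ∧ G.IsForwardMinimal j' k σ₁' σ₂') ∨
  (∃ j k k' σ₁ σ₂ σ₁' σ₂', k ≠ k' ∧
      G.IsBackwardMinimal j k σ₁ σ₂ ∧ G.IsBackwardMinimal j k' σ₁' σ₂')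

/-- A TLG is an NCC-graph if it contains no pair of minimal co-terminal cells. -/
def IsNCC : Prop := ¬ G.HasMinimalCoTerminalCells

end TLG


/-- The TLG of Figure 2: vertices `t j = j/7` for `j = 0, …, 7` and edges
`E_{01}, E_{12}, E_{13}, E_{24}, E_{25}, E_{34}, E_{35}, E_{46}, E_{56}, E_{67}`. -/
noncomputable def fig2 : TLG where
  N := 7
  hN := by norm_num
  t := fun j => (j : ℝ) / 7
  ht0 := by norm_num
  htN := by norm_num [Fin.last]
  hmono := by
    intro a b hab
    have h : (a : ℝ) ≤ (b : ℝ) := by exact_mod_cast (Fin.le_def.mp hab)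
    show (a : ℝ) / 7 ≤ (b : ℝ) / 7
    gcongr
  hint := by
    intro k h0 hl
    fin_cases k <;> simp_all [Fin.last] <;> norm_num
  edges :=
    {((0,1),0), ((1,2),0), ((1,3),0), ((2,4),0), ((2,5),0), ((3,4),0), ((3,5),0),
     ((4,6),0), ((5,6),0), ((6,7),0)}
  hedge := by
    intro e he
    fin_cases he <;> norm_num [show ((0:Fin 8):ℕ)=0 from rfl, show ((1:Fin 8):ℕ)=1 from rfl, show ((2:Fin 8):ℕ)=2 from rfl, show ((3:Fin 8):ℕ)=3 from rfl, show ((4:Fin 8):ℕ)=4 from rfl, show ((5:Fin 8):ℕ)=5 from rfl, show ((6:Fin 8):ℕ)=6 from rfl, show ((7:Fin 8):ℕ)=7 from rfl]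
  hdeg := by decide
  hio := by decide

namespace TLG

lemma path_mono (G : TLG) : ∀ (l : List G.Edge),
    (∀ e ∈ l, e ∈ G.edges) → l.Chain' (fun e f => e.1.2 = f.1.1) →
    ∀ e₀ f, l.head? = some e₀ → f ∈ l → G.t e₀.1.1 ≤ G.t f.1.1 := by
  intro l
  induction l with
  | nil => intro _ _ e₀ f _ hf; simp at hf
  | cons e rest ih =>
    intro hmem hchain e₀ f he₀ hf
    simp only [List.head?_cons, Option.some.injEq] at he₀
    subst he₀
    rcases List.mem_cons.mp hf with rfl | hf
    · exact le_refl _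
    · match rest, hf with
      | f₁ :: rest', hf =>
        have h1 : e.1.2 = f₁.1.1 := (List.isChain_cons_cons.mp hchain).1
        have h2 := ih (fun x hx => hmem x (List.mem_cons_of_mem _ hx))
          (List.isChain_cons_cons.mp hchain).2 f₁ f rfl hf
        have h3 : G.t e.1.1 < G.t e.1.2 := G.hedge e (hmem e (List.mem_cons_self ..))
        rw [h1] at h3
        exact le_of_lt (lt_of_lt_of_le h3 h2)

lemma path_mono_tail (G : TLG) {e : G.Edge} {rest : List G.Edge}
    (hmem : ∀ x ∈ e :: rest, x ∈ G.edges)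
    (hchain : (e :: rest).Chain' fun x y => x.1.2 = y.1.1)
    {f} (hf : f ∈ rest) : G.t e.1.2 ≤ G.t f.1.1 := by
  match rest, hf with
  | f₁ :: rest', hf =>
    have h1 : e.1.2 = f₁.1.1 := (List.isChain_cons_cons.mp hchain).1
    have := G.path_mono (f₁ :: rest') (fun x hx => hmem x (List.mem_cons_of_mem _ hx))
      (List.isChain_cons_cons.mp hchain).2 f₁ f rfl hf
    rw [h1]; exact this

lemma exists_last (G : TLG) {l : List G.Edge} (h : G.IsTimePath l) {k}
    (hk : G.pathEnd l = some k) :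
    ∃ g, l.getLast? = some g ∧ g ∈ G.edges ∧ g.1.2 = k := by
  obtain ⟨hne, hmem, _⟩ := h
  obtain ⟨g, hg, hgk⟩ : ∃ g, l.getLast? = some g ∧ g.1.2 = k := by
    unfold pathEnd at hk
    cases hl : l.getLast? with
    | none => rw [hl] at hk; simp at hk
    | some g => rw [hl] at hk; simp at hk; exact ⟨g, rfl, hk⟩
  have hgl : g ∈ l := List.mem_of_getLast? hg
  exact ⟨g, hg, hmem g hgl, hgk⟩

lemma exists_head (G : TLG) {l : List G.Edge} (h : G.IsTimePath l) {j}
    (hj : G.pathStart l = some j) :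
    ∃ e rest, l = e :: rest ∧ e ∈ G.edges ∧ e.1.1 = j := by
  obtain ⟨hne, hmem, _⟩ := h
  match l, hne with
  | e :: rest, _ =>
    unfold pathStart at hj
    simp at hj
    exact ⟨e, rest, rfl, hmem e (List.mem_cons_self), hj⟩

lemma start_lt_end (G : TLG) {l : List G.Edge} (h : G.IsTimePath l) {j k}
    (hj : G.pathStart l = some j) (hk : G.pathEnd l = some k) : G.t j < G.t k := by
  obtain ⟨g, hg, hge, hgk⟩ := G.exists_last h hk
  have hgl : g ∈ l := List.mem_of_getLast? hg
  obtain ⟨e, rest, rfl, hee, hej⟩ := G.exists_head h hj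
  have := G.path_mono (e :: rest) h.2.1 h.2.2 e g rfl hgl
  rw [hej] at this
  calc G.t j ≤ G.t g.1.1 := this
    _ < G.t g.1.2 := G.hedge g hge
    _ = G.t k := by rw [hgk]

end TLG
lemma mem_fig2_edges {e : fig2.Edge} (h : e ∈ fig2.edges) :
    e = ((0,1),0) ∨ e = ((1,2),0) ∨ e = ((1,3),0) ∨ e = ((2,4),0) ∨ e = ((2,5),0) ∨
    e = ((3,4),0) ∨ e = ((3,5),0) ∨ e = ((4,6),0) ∨ e = ((5,6),0) ∨ e = ((6,7),0) := by
  have : e ∈ ({((0,1),0), ((1,2),0), ((1,3),0), ((2,4),0), ((2,5),0), ((3,4),0), ((3,5),0),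
     ((4,6),0), ((5,6),0), ((6,7),0)} : Finset ((Fin 8 × Fin 8) × Fin 2)) := h
  fin_cases h <;> delta fig2 <;> decide

example : (((3,4),0) : fig2.Edge) ∈ fig2.edges := by decide
lemma fig2_t (j : Fin 8) : fig2.t j = (j : ℝ) / 7 := rfl
lemma fig2_t_le {a b : Fin 8} : fig2.t a ≤ fig2.t b ↔ a ≤ b := by
  show (a:ℝ)/7 ≤ (b:ℝ)/7 ↔ _
  rw [div_le_div_iff₀ (by norm_num) (by norm_num)]
  constructor
  · intro h
    have : ((a:ℕ):ℝ) ≤ ((b:ℕ):ℝ) := by linarith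
    exact_mod_cast Fin.le_def.mpr (by exact_mod_cast this)
  · intro h
    have : ((a:ℕ):ℝ) ≤ ((b:ℕ):ℝ) := by exact_mod_cast Fin.le_def.mp h
    linarith

lemma fig2_t_lt {a b : Fin 8} : fig2.t a < fig2.t b ↔ a < b := by
  rw [← not_le, ← not_le, not_iff_not, fig2_t_le]
lemma fig2_unique {j k : Fin 8} (hj : j = 2 ∨ j = 3) (hk : k = 4 ∨ k = 5)
    {l : List fig2.Edge} (h : fig2.IsTimePath l) (hs : fig2.pathStart l = some j)
    (he : fig2.pathEnd l = some k) : l = [((j,k),0)] := by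
  obtain ⟨e, rest, rfl, hee, hej⟩ := fig2.exists_head h hs
  obtain ⟨g, hg, hge, hgk⟩ := fig2.exists_last h he
  have hrest : rest = [] := by
    by_contra hne
    match rest, hne with
    | f₁ :: rest', _ =>
      have hg' : (f₁ :: rest').getLast? = some g := by
        rwa [List.getLast?_cons_cons] at hg
      have hgmem : g ∈ f₁ :: rest' := List.mem_of_getLast? hg'
      have hmt : fig2.t e.1.2 ≤ fig2.t g.1.1 := fig2.path_mono_tail h.2.1 h.2.2 hgmem
      have h1 : (4:Fin 8) ≤ e.1.2 := by
        rcases mem_fig2_edges hee with rfl|rfl|rfl|rfl|rfl|rfl|rfl|rfl|rfl|rfl <;>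
          rcases hj with rfl|rfl <;> revert hej <;> delta fig2 <;> decide
      have h2 : g.1.1 ≤ (3:Fin 8) := by
        rcases mem_fig2_edges hge with rfl|rfl|rfl|rfl|rfl|rfl|rfl|rfl|rfl|rfl <;>
          rcases hk with rfl|rfl <;> revert hgk <;> delta fig2 <;> decide
      have : (4:Fin 8) ≤ 3 := le_trans h1 (le_trans (fig2_t_le.mp hmt) h2)
      exact absurd this (by decide)
  subst hrest
  have hge2 : e.1.2 = k := by
    simp only [List.getLast?_singleton, Option.some.injEq] at hg
    rw [hg]; exact hgk
  rcases mem_fig2_edges hee with rfl|rfl|rfl|rfl|rfl|rfl|rfl|rfl|rfl|rfl <;>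
    rcases hj with rfl|rfl <;> rcases hk with rfl|rfl <;> revert hej hge2 <;> delta fig2 <;> decide

lemma fig2_no23 {l : List fig2.Edge} (h : fig2.IsTimePath l)
    (hs : fig2.pathStart l = some 2) (he : fig2.pathEnd l = some 3) : False := by
  obtain ⟨e, rest, rfl, hee, hej⟩ := fig2.exists_head h hs
  obtain ⟨g, hg, hge, hgk⟩ := fig2.exists_last h he
  have hgl : g ∈ e :: rest := List.mem_of_getLast? hg
  have hmt : fig2.t e.1.1 ≤ fig2.t g.1.1 := fig2.path_mono _ h.2.1 h.2.2 e g rfl hgl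
  have h2 : g.1.1 ≤ (1:Fin 8) := by
    rcases mem_fig2_edges hge with rfl|rfl|rfl|rfl|rfl|rfl|rfl|rfl|rfl|rfl <;>
      revert hgk <;> delta fig2 <;> decide
  rw [hej] at hmt
  have : (2:Fin 8) ≤ 1 := le_trans (fig2_t_le.mp hmt) h2
  exact absurd this (by decide)
lemma fig2_cell36 :
    fig2.IsCell 3 6 [((3,4),0), ((4,6),0)] [((3,5),0), ((5,6),0)] := by
  refine ⟨⟨by simp, ?_, List.isChain_cons_cons.mpr ⟨rfl, List.isChain_singleton _⟩⟩,
    ⟨by simp, ?_, List.isChain_cons_cons.mpr ⟨rfl, List.isChain_singleton _⟩⟩,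
    by decide, rfl, rfl, rfl, rfl, ?_⟩ <;>
  try (intro e he; rcases List.mem_cons.mp he with rfl | he';
       · decide
       · rw [List.mem_singleton.mp he']; decide)
  intro v h1 h2
  simp only [TLG.interior, List.tail, List.mem_singleton, Set.mem_setOf_eq] at h1 h2
  obtain ⟨e, rfl, he⟩ := h1
  obtain ⟨f, rfl, hf⟩ := h2
  rw [← he] at hf
  exact absurd hf (by decide)

lemma fig2_cell26 :
    fig2.IsCell 2 6 [((2,5),0), ((5,6),0)] [((2,4),0), ((4,6),0)] := by
  refine ⟨⟨by simp, ?_, List.isChain_cons_cons.mpr ⟨rfl, List.isChain_singleton _⟩⟩,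
    ⟨by simp, ?_, List.isChain_cons_cons.mpr ⟨rfl, List.isChain_singleton _⟩⟩,
    by decide, rfl, rfl, rfl, rfl, ?_⟩ <;>
  try (intro e he; rcases List.mem_cons.mp he with rfl | he';
       · decide
       · rw [List.mem_singleton.mp he']; decide)
  intro v h1 h2
  simp only [TLG.interior, List.tail, List.mem_singleton, Set.mem_setOf_eq] at h1 h2
  obtain ⟨e, rfl, he⟩ := h1
  obtain ⟨f, rfl, hf⟩ := h2
  rw [← he] at hf
  exact absurd hf (by decide)

lemma fig2_min {j k' : Fin 8} (hj : j = 2 ∨ j = 3) {σ₁ σ₂ : List fig2.Edge}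
    (hc : fig2.IsCell j k' σ₁ σ₂) : fig2.t 6 ≤ fig2.t k' := by
  obtain ⟨h1, h2, hne, hs1, hs2, he1, he2, _⟩ := hc
  have hlt : (j:Fin 8) < k' := fig2_t_lt.mp (fig2.start_lt_end h1 hs1 he1)
  refine fig2_t_le.mpr ?_
  by_contra hk
  have hk6 : k' < (6:Fin 8) := not_le.mp hk
  have hk3 : k' ≠ (3:Fin 8) := by
    rintro rfl
    rcases hj with rfl | rfl
    · exact fig2_no23 h1 hs1 he1
    · exact absurd hlt (by decide)
  have hj2 : (2:Fin 8) ≤ j := by rcases hj with rfl | rfl <;> decide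
  have h45 : k' = 4 ∨ k' = 5 := by
    have a1 : 2 < k'.val := lt_of_le_of_lt (Fin.le_def.mp hj2) (Fin.lt_def.mp hlt)
    have a2 : k'.val < 6 := Fin.lt_def.mp hk6
    have a3 : k'.val ≠ 3 := fun hh => hk3 (Fin.ext (by simpa using hh))
    rcases Nat.lt_or_ge k'.val 5 with h | h
    · left; exact Fin.ext (show k'.val = 4 by omega)
    · right; exact Fin.ext (show k'.val = 5 by omega)
  have hu1 := fig2_unique hj h45 h1 hs1 he1
  have hu2 := fig2_unique hj h45 h2 hs2 he2
  exact hne (hu1.trans hu2.symm)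

lemma fig2_fm3 :
    fig2.IsForwardMinimal 3 6 [((3,4),0), ((4,6),0)] [((3,5),0), ((5,6),0)] :=
  ⟨fig2_cell36, fun _ _ _ hc => fig2_min (Or.inr rfl) hc⟩

lemma fig2_fm2 :
    fig2.IsForwardMinimal 2 6 [((2,5),0), ((5,6),0)] [((2,4),0), ((4,6),0)] :=
  ⟨fig2_cell26, fun _ _ _ hc => fig2_min (Or.inl rfl) hc⟩
/-- **Theorem (Burdzy–Pal).** The TLG of Figure 2 is not an NCC-graph: the cells
`(σ(3,4,6), σ(3,5,6))` and `(σ(2,5,6), σ(2,4,6))` form a pair of minimal co-terminal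
cells (both are forward-minimal, with different starts and the same end). -/
theorem fig2_not_isNCC :
    fig2.IsForwardMinimal 3 6 [((3,4),0), ((4,6),0)] [((3,5),0), ((5,6),0)] ∧
    fig2.IsForwardMinimal 2 6 [((2,5),0), ((5,6),0)] [((2,4),0), ((4,6),0)] ∧
    fig2.HasMinimalCoTerminalCells ∧ ¬ fig2.IsNCC := by
  have hM : fig2.HasMinimalCoTerminalCells :=
    Or.inl ⟨3, 2, 6, _, _, _, _, by decide, fig2_fm3, fig2_fm2⟩
  exact ⟨fig2_fm3, fig2_fm2, hM, fun h => h hM⟩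
end

section
/- In any finite time-like graph, every cell that is forward-minimal or backward-minimal is simple. -/
namespace TLG

variable (G : TLG)

/-- A pair of time paths is simple if no time path of `G` starts at an interior vertex of
one of them and ends at an interior vertex of the other. -/
def CellIsSimple (σ₁ σ₂ : List G.Edge) : Prop :=
  ¬ ∃ (τ : List G.Edge) (v w : Fin (G.N + 1)), G.IsTimePath τ ∧
      G.pathStart τ = some v ∧ G.pathEnd τ = some w ∧
      ((v ∈ G.interior σ₁ ∧ w ∈ G.interior σ₂) ∨
       (v ∈ G.interior σ₂ ∧ w ∈ G.interior σ₁))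

end TLG


namespace TLGAux

variable {G : TLG}

lemma pathStart_cons (e : G.Edge) (l : List G.Edge) : G.pathStart (e :: l) = some e.1.1 := rfl

lemma pathStart_some {l : List G.Edge} (h : l ≠ []) :
    G.pathStart l = some ((l.head h).1.1) := by
  cases l with
  | nil => simp at h
  | cons a l => rfl

lemma pathEnd_some {l : List G.Edge} (h : l ≠ []) :
    G.pathEnd l = some ((l.getLast h).1.2) := by
  simp [TLG.pathEnd, List.getLast?_eq_getLast h]

lemma head_le {l : List G.Edge} (hc : l.Chain' fun e f => e.1.2 = f.1.1)
    (hs : ∀ e ∈ l, e ∈ G.edges) (hne : l ≠ []) :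
    ∀ e ∈ l, G.t ((l.head hne).1.1) ≤ G.t e.1.1 := by
  induction l with
  | nil => simp at hne
  | cons a l ih =>
    intro e he
    rcases List.mem_cons.1 he with rfl | he'
    · simp
    · have hl : l ≠ [] := List.ne_nil_of_mem he'
      have h1 : G.t a.1.1 < G.t a.1.2 := G.hedge a (hs a (.head l))
      have h2 : a.1.2 = (l.head hl).1.1 := by
        cases l with
        | nil => simp at hl
        | cons b l => exact (List.isChain_cons_cons.1 hc).1
      have h3 := ih hc.tail (fun f hf => hs f (.tail _ hf)) hl e he'
      have : G.t a.1.1 ≤ G.t ((l.head hl).1.1) := by rw [← h2]; exact (h1.trans_le (by rw [h2])).le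
      simpa using this.trans h3

lemma lt_getLast {l : List G.Edge} (hc : l.Chain' fun e f => e.1.2 = f.1.1)
    (hs : ∀ e ∈ l, e ∈ G.edges) (hne : l ≠ []) :
    ∀ e ∈ l, G.t e.1.1 < G.t ((l.getLast hne).1.2) := by
  induction l with
  | nil => simp at hne
  | cons a l ih =>
    intro e he
    rcases eq_or_ne l [] with rfl | hl
    · simp at he; subst he; simpa using G.hedge e (hs e (.head _))
    · have hgl : (a :: l).getLast hne = l.getLast hl := List.getLast_cons hl
      have ih' := ih hc.tail (fun f hf => hs f (.tail _ hf)) hl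
      rcases List.mem_cons.1 he with rfl | he'
      · have h1 : G.t e.1.1 < G.t e.1.2 := G.hedge e (hs e (.head _))
        have h2 : e.1.2 = (l.head hl).1.1 := by
          cases l with
          | nil => simp at hl
          | cons b l => exact (List.isChain_cons_cons.1 hc).1
        have h3 := ih' (l.head hl) (List.head_mem hl)
        rw [hgl]
        calc G.t e.1.1 < G.t e.1.2 := h1
          _ = G.t ((l.head hl).1.1) := by rw [h2]
          _ < _ := h3
      · rw [hgl]; exact ih' e he'

lemma interior_lt {l : List G.Edge} {a b v : Fin (G.N + 1)} (hl : G.IsTimePath l)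
    (ha : G.pathStart l = some a) (hb : G.pathEnd l = some b)
    (hv : v ∈ G.interior l) : G.t a < G.t v ∧ G.t v < G.t b := by
  obtain ⟨hne, hs, hc⟩ := hl
  obtain ⟨e, he, rfl⟩ := hv
  cases l with
  | nil => simp at hne
  | cons f l =>
    simp only [List.tail_cons] at he
    have hl : l ≠ [] := List.ne_nil_of_mem he
    have ha' : a = f.1.1 := by
      rw [pathStart_cons] at ha; exact (Option.some_injective _ ha).symm
    have hb' : b = ((f :: l).getLast (by simp)).1.2 := by
      rw [pathEnd_some (by simp : (f :: l) ≠ [])] at hb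
      exact (Option.some_injective _ hb).symm
    constructor
    · have h1 : G.t f.1.1 < G.t f.1.2 := G.hedge f (hs f (.head _))
      have h2 : f.1.2 = (l.head hl).1.1 := by
        cases l with
        | nil => simp at hl
        | cons b l => exact (List.isChain_cons_cons.1 hc).1
      have h3 := head_le hc.tail (fun g hg => hs g (.tail _ hg)) hl e he
      rw [ha']
      calc G.t f.1.1 < G.t f.1.2 := h1
        _ = _ := by rw [h2]
        _ ≤ _ := by simpa using h3
    · rw [hb']
      exact lt_getLast hc hs (by simp) e (.tail _ he)


lemma split_prefix {l : List G.Edge} {a v : Fin (G.N + 1)} (hl : G.IsTimePath l)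
    (ha : G.pathStart l = some a) (hv : v ∈ G.interior l) :
    ∃ p q, l = p ++ q ∧ q ≠ [] ∧ G.IsTimePath p ∧ G.pathStart p = some a ∧
      G.pathEnd p = some v ∧ (∀ x ∈ G.interior p, x ∈ G.interior l) ∧
      l.head? = p.head? := by
  obtain ⟨hne, hs, hc⟩ := hl
  obtain ⟨e, he, rfl⟩ := hv
  cases l with
  | nil => simp at hne
  | cons f l =>
    simp only [List.tail_cons] at he
    obtain ⟨s, t, rfl⟩ := List.append_of_mem he
    refine ⟨f :: s, e :: t, by simp, by simp, ?_, ?_, ?_, ?_, by simp⟩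
    · refine ⟨by simp, fun g hg => hs g ?_, hc.prefix ⟨e :: t, by simp⟩⟩
      rcases hg with _ | hg
      · exact .head _
      · exact List.mem_cons_of_mem _ (List.mem_append_left _ (by assumption))
    · exact ha
    · have hc' : List.Chain' (fun e f => e.1.2 = f.1.1) ((f :: s) ++ (e :: t)) := by
        rw [List.cons_append]; exact hc
      have hj := (List.isChain_append.1 hc').2.2
      rw [pathEnd_some (by simp : (f :: s) ≠ [])]
      have := hj ((f :: s).getLast (by simp)) (by simp [List.getLast?_eq_getLast]) e rfl
      rw [this]
    · rintro x ⟨g, hg, rfl⟩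
      simp only [List.tail_cons] at hg
      exact ⟨g, by simp [List.mem_append_left _ hg], rfl⟩

lemma split_suffix {l : List G.Edge} {b v : Fin (G.N + 1)} (hl : G.IsTimePath l)
    (hb : G.pathEnd l = some b) (hv : v ∈ G.interior l) :
    ∃ p q, l = p ++ q ∧ p ≠ [] ∧ G.IsTimePath q ∧ G.pathStart q = some v ∧
      G.pathEnd q = some b ∧ (∀ x ∈ G.interior q, x ∈ G.interior l) ∧
      l.getLast? = q.getLast? := by
  obtain ⟨hne, hs, hc⟩ := hl
  obtain ⟨e, he, rfl⟩ := hv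
  cases l with
  | nil => simp at hne
  | cons f l =>
    simp only [List.tail_cons] at he
    obtain ⟨s, t, rfl⟩ := List.append_of_mem he
    have hgl : (f :: (s ++ e :: t)).getLast? = (e :: t).getLast? := by
      rw [show f :: (s ++ e :: t) = (f :: s) ++ (e :: t) by simp,
        List.getLast?_append]
      simp [List.getLast?_eq_getLast (l := e :: t) (by simp)]
    refine ⟨f :: s, e :: t, by simp, by simp, ?_, rfl, ?_, ?_, hgl⟩
    · refine ⟨by simp, fun g hg => hs g ?_, hc.suffix ⟨f :: s, by simp⟩⟩
      · exact List.mem_cons_of_mem _ (List.mem_append_right _ hg)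
    · rw [TLG.pathEnd, ← hgl]; exact hb
    · rintro x ⟨g, hg, rfl⟩
      simp only [List.tail_cons] at hg
      exact ⟨g, by simp [hg], rfl⟩

lemma append_path {p q : List G.Edge} {a v b : Fin (G.N + 1)} (hp : G.IsTimePath p)
    (hq : G.IsTimePath q) (hpe : G.pathEnd p = some v) (hqs : G.pathStart q = some v)
    (hpa : G.pathStart p = some a) (hqb : G.pathEnd q = some b) :
    G.IsTimePath (p ++ q) ∧ G.pathStart (p ++ q) = some a ∧ G.pathEnd (p ++ q) = some b ∧
      ∀ x ∈ G.interior (p ++ q), x ∈ G.interior p ∨ x = v ∨ x ∈ G.interior q := by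
  obtain ⟨hpne, hps, hpc⟩ := hp
  obtain ⟨hqne, hqs', hqc⟩ := hq
  have hjoin : (p.getLast hpne).1.2 = (q.head hqne).1.1 := by
    rw [pathEnd_some hpne] at hpe
    rw [pathStart_some hqne] at hqs
    rw [Option.some_injective _ hpe, ← Option.some_injective _ hqs]
  refine ⟨⟨by simp [hpne], ?_, ?_⟩, ?_, ?_, ?_⟩
  · intro g hg
    rcases List.mem_append.1 hg with hg | hg
    exacts [hps g hg, hqs' g hg]
  · show List.IsChain _ (p ++ q); rw [List.isChain_append]
    refine ⟨hpc, hqc, ?_⟩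
    intro x hx y hy
    rw [List.getLast?_eq_getLast hpne] at hx
    rw [List.head?_eq_head hqne] at hy
    rw [← Option.some_injective _ hx, ← Option.some_injective _ hy] at *
    exact hjoin
  · cases p with
    | nil => simp at hpne
    | cons f s => rw [List.cons_append, pathStart_cons, ← pathStart_cons f s]; exact hpa
  · rw [TLG.pathEnd, List.getLast?_append, List.getLast?_eq_getLast hqne]
    rw [pathEnd_some hqne] at hqb
    simpa using hqb
  · rintro x ⟨g, hg, rfl⟩
    cases p with
    | nil => simp at hpne
    | cons f s =>
      simp only [List.cons_append, List.tail_cons] at hg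
      rcases List.mem_append.1 hg with hg | hg
      · exact Or.inl ⟨g, hg, rfl⟩
      · cases q with
        | nil => simp at hqne
        | cons e t =>
          rcases List.mem_cons.1 hg with rfl | hg
          · refine Or.inr (Or.inl ?_)
            rw [pathStart_cons] at hqs
            exact (Option.some_injective _ hqs)
          · exact Or.inr (Or.inr ⟨g, hg, rfl⟩)


lemma truncate_fwd (S : Set (Fin (G.N + 1))) :
    ∀ n (τ : List G.Edge), τ.length ≤ n → ∀ {v w : Fin (G.N + 1)}, G.IsTimePath τ →
    G.pathStart τ = some v → G.pathEnd τ = some w → w ∈ S →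
    ∃ τ' w', G.IsTimePath τ' ∧ G.pathStart τ' = some v ∧ G.pathEnd τ' = some w' ∧
      w' ∈ S ∧ ∀ x ∈ G.interior τ', x ∉ S := by
  intro n
  induction n with
  | zero =>
    intro τ hlen v w hτ _ _ _
    obtain ⟨hne, -, -⟩ := hτ
    simp [List.length_eq_zero_iff.1 (Nat.le_zero.1 hlen)] at hne
  | succ n ih =>
    intro τ hlen v w hτ hv hw hwS
    by_cases hint : ∀ x ∈ G.interior τ, x ∉ S
    · exact ⟨τ, w, hτ, hv, hw, hwS, hint⟩
    · push_neg at hint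
      obtain ⟨x, hx, hxS⟩ := hint
      obtain ⟨p, q, rfl, hqne, hp, hps, hpe, -, -⟩ := split_prefix hτ hv hx
      have hlen' : p.length ≤ n := by
        have : (p ++ q).length = p.length + q.length := List.length_append
        have : 1 ≤ q.length := List.length_pos_iff.2 hqne
        simp only [List.length_append] at hlen
        omega
      exact ih p hlen' hp hps hpe hxS

lemma truncate_bwd (S : Set (Fin (G.N + 1))) :
    ∀ n (τ : List G.Edge), τ.length ≤ n → ∀ {v w : Fin (G.N + 1)}, G.IsTimePath τ →
    G.pathStart τ = some v → G.pathEnd τ = some w → v ∈ S →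
    ∃ τ' v', G.IsTimePath τ' ∧ G.pathStart τ' = some v' ∧ G.pathEnd τ' = some w ∧
      v' ∈ S ∧ ∀ x ∈ G.interior τ', x ∉ S := by
  intro n
  induction n with
  | zero =>
    intro τ hlen v w hτ _ _ _
    obtain ⟨hne, -, -⟩ := hτ
    simp [List.length_eq_zero_iff.1 (Nat.le_zero.1 hlen)] at hne
  | succ n ih =>
    intro τ hlen v w hτ hv hw hvS
    by_cases hint : ∀ x ∈ G.interior τ, x ∉ S
    · exact ⟨τ, v, hτ, hv, hw, hvS, hint⟩
    · push_neg at hint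
      obtain ⟨x, hx, hxS⟩ := hint
      obtain ⟨p, q, rfl, hpne, hq, hqs, hqe, -, -⟩ := split_suffix hτ hw hx
      have hlen' : q.length ≤ n := by
        have : 1 ≤ p.length := List.length_pos_iff.2 hpne
        simp only [List.length_append] at hlen
        omega
      exact ih q hlen' hq hqs hqe hxS

lemma head_eq_contra {σ₁ σ₂ : List G.Edge} {v w : Fin (G.N + 1)}
    (h₁ : G.IsTimePath σ₁) (h₂ : G.IsTimePath σ₂)
    (hdisj : ∀ x, x ∈ G.interior σ₁ → x ∉ G.interior σ₂)
    (hv : v ∈ G.interior σ₁) (hw : w ∈ G.interior σ₂)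
    (hh : σ₁.head? = σ₂.head?) : False := by
  obtain ⟨hne₁, -, hc₁⟩ := h₁
  obtain ⟨hne₂, -, hc₂⟩ := h₂
  cases σ₁ with
  | nil => simp at hne₁
  | cons f₁ l₁ =>
  cases σ₂ with
  | nil => simp at hne₂
  | cons f₂ l₂ =>
  simp only [List.head?_cons, Option.some_inj] at hh
  subst hh
  have hl₁ : l₁ ≠ [] := by
    rintro rfl
    obtain ⟨g, hg, -⟩ := hv
    simp at hg
  have hl₂ : l₂ ≠ [] := by
    rintro rfl
    obtain ⟨g, hg, -⟩ := hw
    simp at hg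
  have k₁ : f₁.1.2 = (l₁.head hl₁).1.1 := by
    cases l₁ with
    | nil => simp at hl₁
    | cons b l => exact (List.isChain_cons_cons.1 hc₁).1
  have k₂ : f₁.1.2 = (l₂.head hl₂).1.1 := by
    cases l₂ with
    | nil => simp at hl₂
    | cons b l => exact (List.isChain_cons_cons.1 hc₂).1
  exact hdisj f₁.1.2 ⟨l₁.head hl₁, by simp [List.head_mem], k₁.symm⟩
    ⟨l₂.head hl₂, by simp [List.head_mem], k₂.symm⟩

lemma last_eq_contra {σ₁ σ₂ : List G.Edge} {v w : Fin (G.N + 1)}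
    (h₁ : G.IsTimePath σ₁) (h₂ : G.IsTimePath σ₂)
    (hdisj : ∀ x, x ∈ G.interior σ₁ → x ∉ G.interior σ₂)
    (hv : v ∈ G.interior σ₁) (hw : w ∈ G.interior σ₂)
    (hh : σ₁.getLast? = σ₂.getLast?) : False := by
  obtain ⟨hne₁, -, -⟩ := h₁
  obtain ⟨hne₂, -, -⟩ := h₂
  rw [List.getLast?_eq_getLast hne₁, List.getLast?_eq_getLast hne₂,
    Option.some_inj] at hh
  have mem₁ : σ₁.getLast hne₁ ∈ σ₁.tail := by
    cases σ₁ with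
    | nil => simp at hne₁
    | cons f l =>
      have hl : l ≠ [] := by
        rintro rfl
        obtain ⟨g, hg, -⟩ := hv
        simp at hg
      rw [List.getLast_cons hl]
      simpa using List.getLast_mem hl
  have mem₂ : σ₂.getLast hne₂ ∈ σ₂.tail := by
    cases σ₂ with
    | nil => simp at hne₂
    | cons f l =>
      have hl : l ≠ [] := by
        rintro rfl
        obtain ⟨g, hg, -⟩ := hw
        simp at hg
      rw [List.getLast_cons hl]
      simpa using List.getLast_mem hl
  exact hdisj (σ₁.getLast hne₁).1.1 ⟨_, mem₁, rfl⟩ ⟨_, hh ▸ mem₂, by rw [hh]⟩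

lemma cell_symm {j k : Fin (G.N + 1)} {σ₁ σ₂ : List G.Edge}
    (h : G.IsCell j k σ₁ σ₂) : G.IsCell j k σ₂ σ₁ := by
  obtain ⟨h₁, h₂, hne, hs₁, hs₂, he₁, he₂, hdisj⟩ := h
  exact ⟨h₂, h₁, hne.symm, hs₂, hs₁, he₂, he₁, fun v hv₂ hv₁ => hdisj v hv₁ hv₂⟩


lemma fwd_case {j k : Fin (G.N + 1)} {σ₁ σ₂ : List G.Edge}
    (hcell : G.IsCell j k σ₁ σ₂)
    (hmin : ∀ k' σ₁' σ₂', G.IsCell j k' σ₁' σ₂' → G.t k ≤ G.t k')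
    {τ : List G.Edge} {v w : Fin (G.N + 1)} (hτ : G.IsTimePath τ)
    (hv : G.pathStart τ = some v) (hw : G.pathEnd τ = some w)
    (hv1 : v ∈ G.interior σ₁) (hw2 : w ∈ G.interior σ₂) : False := by
  obtain ⟨hσ₁, hσ₂, hne, hs₁, hs₂, he₁, he₂, hdisj⟩ := hcell
  obtain ⟨τ', w', hτ', hτ's, hτ'e, hw', hτ'int⟩ :=
    truncate_fwd (G.interior σ₂) τ.length τ le_rfl hτ hv hw hw2
  obtain ⟨p, q, -, hqne, hp, hps, hpe, hpi, hph⟩ := split_prefix hσ₁ hs₁ hv1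
  obtain ⟨hA, hAs, hAe, hAint⟩ := append_path hp hτ' hpe hτ's hps hτ'e
  obtain ⟨p₂, q₂, -, hq₂ne, hp₂, hp₂s, hp₂e, hp₂i, hp₂h⟩ := split_prefix hσ₂ hs₂ hw'
  have hAne : p ++ τ' ≠ p₂ := by
    intro hEq
    refine head_eq_contra hσ₁ hσ₂ hdisj hv1 hw' ?_
    have h3 : (p ++ τ').head? = p.head? := by
      cases p with
      | nil => exact absurd rfl hp.1
      | cons f s => rfl
    rw [hph, hp₂h, ← hEq, h3]
  have hcell' : G.IsCell j w' (p ++ τ') p₂ := by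
    refine ⟨hA, hp₂, hAne, hAs, hp₂s, hAe, hp₂e, ?_⟩
    intro x hx hx₂
    have hx₂' : x ∈ G.interior σ₂ := hp₂i x hx₂
    rcases hAint x hx with hx | rfl | hx
    · exact hdisj x (hpi x hx) hx₂'
    · exact hdisj x hv1 hx₂'
    · exact hτ'int x hx hx₂'
  have h1 := hmin w' _ _ hcell'
  have h2 : G.t w' < G.t k := (interior_lt hσ₂ hs₂ he₂ hw').2
  linarith

lemma bwd_case {j k : Fin (G.N + 1)} {σ₁ σ₂ : List G.Edge}
    (hcell : G.IsCell j k σ₁ σ₂)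
    (hmin : ∀ j' σ₁' σ₂', G.IsCell j' k σ₁' σ₂' → G.t j' ≤ G.t j)
    {τ : List G.Edge} {v w : Fin (G.N + 1)} (hτ : G.IsTimePath τ)
    (hv : G.pathStart τ = some v) (hw : G.pathEnd τ = some w)
    (hv1 : v ∈ G.interior σ₁) (hw2 : w ∈ G.interior σ₂) : False := by
  obtain ⟨hσ₁, hσ₂, hne, hs₁, hs₂, he₁, he₂, hdisj⟩ := hcell
  obtain ⟨τ', v', hτ', hτ's, hτ'e, hv', hτ'int⟩ :=
    truncate_bwd (G.interior σ₁) τ.length τ le_rfl hτ hv hw hv1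
  obtain ⟨p₂, q₂, -, hp₂ne, hq₂, hq₂s, hq₂e, hq₂i, hσ₂l⟩ := split_suffix hσ₂ he₂ hw2
  obtain ⟨hA, hAs, hAe, hAint⟩ := append_path hτ' hq₂ hτ'e hq₂s hτ's hq₂e
  obtain ⟨p₁, q₁, -, hp₁ne, hq₁, hq₁s, hq₁e, hq₁i, hσ₁l⟩ := split_suffix hσ₁ he₁ hv'
  have hAne : τ' ++ q₂ ≠ q₁ := by
    intro hEq
    refine last_eq_contra hσ₁ hσ₂ hdisj hv' hw2 ?_
    have h3 : (τ' ++ q₂).getLast? = q₂.getLast? := by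
      rw [List.getLast?_append, List.getLast?_eq_getLast hq₂.1]; rfl
    rw [hσ₁l, hσ₂l, ← hEq, h3]
  have hcell' : G.IsCell v' k (τ' ++ q₂) q₁ := by
    refine ⟨hA, hq₁, hAne, hAs, hq₁s, hAe, hq₁e, ?_⟩
    intro x hx hx₁
    have hx₁' : x ∈ G.interior σ₁ := hq₁i x hx₁
    rcases hAint x hx with hx | rfl | hx
    · exact hτ'int x hx hx₁'
    · exact hdisj x hx₁' hw2
    · exact hdisj x hx₁' (hq₂i x hx)
  have h1 := hmin v' _ _ hcell'
  have h2 : G.t j < G.t v' := (interior_lt hσ₁ hs₁ he₁ hv').1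
  linarith

end TLGAux

/-- **Remark (Burdzy–Pal).** In any finite time-like graph, every cell that is
forward-minimal or backward-minimal is simple. -/
theorem forwardMinimal_or_backwardMinimal_isSimple (G : TLG) (j k : Fin (G.N + 1))
    (σ₁ σ₂ : List G.Edge)
    (h : G.IsForwardMinimal j k σ₁ σ₂ ∨ G.IsBackwardMinimal j k σ₁ σ₂) :
    G.CellIsSimple σ₁ σ₂ := by
  rintro ⟨τ, v, w, hτ, hv, hw, hvw⟩
  rcases h with ⟨hcell, hmin⟩ | ⟨hcell, hmin⟩
  · rcases hvw with ⟨hv1, hw2⟩ | ⟨hv2, hw1⟩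
    · exact TLGAux.fwd_case hcell hmin hτ hv hw hv1 hw2
    · exact TLGAux.fwd_case (TLGAux.cell_symm hcell) hmin hτ hv hw hv2 hw1
  · rcases hvw with ⟨hv1, hw2⟩ | ⟨hv2, hw1⟩
    · exact TLGAux.bwd_case hcell hmin hτ hv hw hv1 hw2
    · exact TLGAux.bwd_case (TLGAux.cell_symm hcell) hmin hτ hv hw hv2 hw1
end

section
/- An integrable process H on an interval T, with almost surely right-continuous sample paths having left limits, satisfies the harness property E[(H(c) - H(b))/(c - b) | F_{a,d}] = (H(d) - H(a))/(d - a) a.s. for all a < b < c < d in T, if and only if for all s < t < u in T, E[H(t) | F_{s,u}] = ((t - s)/(u - s)) H(u) + ((u - t)/(u - s)) H(s) almost surely. -/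
open MeasureTheory Filter Topology

/-- Conditional expectation of a scaled difference. -/
lemma condexp_div_sub_aux {Ω : Type*} [mΩ : MeasurableSpace Ω] (P : Measure Ω)
    [IsProbabilityMeasure P] (m : MeasurableSpace Ω) (hm : m ≤ mΩ)
    (f g : Ω → ℝ) (hf : Integrable f P) (hg : Integrable g P) (k : ℝ) :
    P[(fun ω => (f ω - g ω) / k) | m]
      =ᵐ[P] fun ω => k⁻¹ * ((P[f | m]) ω - (P[g | m]) ω) := by
  have e1 : (fun ω => (f ω - g ω) / k) = k⁻¹ • (f - g) := by
    funext ω; simp [div_eq_inv_mul]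
  rw [e1]
  refine (condExp_smul (μ := P) (m := m) (k⁻¹) (f - g)).trans ?_
  have e3 : P[f - g | m] =ᵐ[P] P[f | m] - P[g | m] := condExp_sub hf hg m
  filter_upwards [e3] with ω hω
  simp only [Pi.smul_apply, smul_eq_mul, hω, Pi.sub_apply]

/-- For an integrable process `H` on an interval `T ⊆ ℝ` with a.s. RCLL sample paths and a
past-future filtration `ℱ`, the harness property
`E[(H c - H b)/(c - b) | ℱ a d] = (H d - H a)/(d - a)` for all `a < b < c < d` in `T`
holds if and only if
`E[H t | ℱ s u] = ((t - s)/(u - s)) H u + ((u - t)/(u - s)) H s` for all `s < t < u` in `T`. -/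
theorem harness_iff_conditional_linear_interpolation
    {Ω : Type*} [mΩ : MeasurableSpace Ω] (P : Measure Ω) [IsProbabilityMeasure P]
    (T : Set ℝ) (hT : T.OrdConnected)
    (H : ℝ → Ω → ℝ)
    (hint : ∀ t ∈ T, Integrable (H t) P)
    (hrcll : ∀ᵐ ω ∂P,
      (∀ t ∈ T, Tendsto (fun s => H s ω) (𝓝[T ∩ Set.Ioi t] t) (𝓝 (H t ω))) ∧
      (∀ t ∈ T, ∃ L : ℝ, Tendsto (fun s => H s ω) (𝓝[T ∩ Set.Iio t] t) (𝓝 L)))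
    (ℱ : ℝ → ℝ → MeasurableSpace Ω)
    (hle : ∀ s u, ℱ s u ≤ mΩ)
    (hadapt : ∀ s ∈ T, ∀ u ∈ T, s < u → ∀ r ∈ T, (r ≤ s ∨ u ≤ r) →
      Measurable[ℱ s u] (H r))
    (hmono : ∀ s₁ ∈ T, ∀ s ∈ T, ∀ u ∈ T, ∀ u₁ ∈ T, s₁ ≤ s → s < u → u ≤ u₁ →
      ℱ s₁ u₁ ≤ ℱ s u) :
    (∀ a ∈ T, ∀ b ∈ T, ∀ c ∈ T, ∀ d ∈ T, a < b → b < c → c < d →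
        P[(fun ω => (H c ω - H b ω) / (c - b)) | ℱ a d]
          =ᵐ[P] fun ω => (H d ω - H a ω) / (d - a)) ↔
    (∀ s ∈ T, ∀ t ∈ T, ∀ u ∈ T, s < t → t < u →
        P[H t | ℱ s u]
          =ᵐ[P] fun ω => ((t - s) / (u - s)) * H u ω + ((u - t) / (u - s)) * H s ω) := by
  constructor
  · -- harness → conditional linear interpolation
    intro h s hs t ht u hu hst htu
    have hsu : s < u := hst.trans htu
    set b := s + (t - s) / 3 with hbdef
    set c := s + 2 * (t - s) / 3 with hcdef
    have hsb : s < b := by rw [hbdef]; linarith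
    have hbc : b < c := by rw [hbdef, hcdef]; linarith
    have hct : c < t := by rw [hcdef]; linarith
    have hcu : c < u := hct.trans htu
    have hbT : b ∈ T := hT.out hs ht ⟨hsb.le, (hbc.trans hct).le⟩
    have hcT : c ∈ T := hT.out hs ht ⟨(hsb.trans hbc).le, hct.le⟩
    -- harness on (s,b,c,u) and (s,b,c,t)
    have h1 := h s hs b hbT c hcT u hu hsb hbc hcu
    have h2 := h s hs b hbT c hcT t ht hsb hbc hct
    have hle_st : ℱ s u ≤ ℱ s t := hmono s hs s hs t ht u hu le_rfl hst htu.le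
    -- tower property
    have tower : P[(fun ω => (H c ω - H b ω) / (c - b)) | ℱ s u]
        =ᵐ[P] P[P[(fun ω => (H c ω - H b ω) / (c - b)) | ℱ s t] | ℱ s u] :=
      (condExp_condExp_of_le hle_st (hle s t)).symm
    have step : P[P[(fun ω => (H c ω - H b ω) / (c - b)) | ℱ s t] | ℱ s u]
        =ᵐ[P] P[(fun ω => (H t ω - H s ω) / (t - s)) | ℱ s u] := condExp_congr_ae h2
    have hsmeas : P[H s | ℱ s u] = H s :=
      condExp_of_stronglyMeasurable (hle s u)
        ((hadapt s hs u hu hsu s hs (Or.inl le_rfl)).stronglyMeasurable) (hint s hs)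
    have comp : P[(fun ω => (H t ω - H s ω) / (t - s)) | ℱ s u]
        =ᵐ[P] fun ω => (t - s)⁻¹ * ((P[H t | ℱ s u]) ω - H s ω) := by
      refine (condexp_div_sub_aux P (ℱ s u) (hle s u) (H t) (H s) (hint t ht)
        (hint s hs) (t - s)).trans ?_
      filter_upwards with ω
      rw [hsmeas]
    have main : (fun ω => (H u ω - H s ω) / (u - s))
        =ᵐ[P] fun ω => (t - s)⁻¹ * ((P[H t | ℱ s u]) ω - H s ω) :=
      h1.symm.trans (tower.trans (step.trans comp))
    filter_upwards [main] with ω hω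
    have hts : t - s ≠ 0 := sub_ne_zero.2 hst.ne'
    have hus : u - s ≠ 0 := sub_ne_zero.2 hsu.ne'
    field_simp at hω ⊢
    nlinarith [hω]
  · -- conditional linear interpolation → harness
    intro h a ha b hb c hc d hd hab hbc hcd
    have had : a < d := hab.trans (hbc.trans hcd)
    have h1 := h a ha b hb d hd hab (hbc.trans hcd)
    have h2 := h a ha c hc d hd (hab.trans hbc) hcd
    have comp := condexp_div_sub_aux P (ℱ a d) (hle a d) (H c) (H b)
      (hint c hc) (hint b hb) (c - b)
    refine comp.trans ?_
    filter_upwards [h1, h2] with ω hω1 hω2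
    rw [hω1, hω2]
    have hcb : c - b ≠ 0 := sub_ne_zero.2 hbc.ne'
    have hda : d - a ≠ 0 := sub_ne_zero.2 had.ne'
    field_simp
    ring
end

section
/- If Y = (Y(t))_{t in [0,1]} is a harness with respect to some past-future filtration, then the family of random variables {Y(s) : 0 <= s <= 1} is uniformly integrable. -/
open MeasureTheory Filter Topology

lemma abs_condexp_ae_le' {Ω : Type*} {m m0 : MeasurableSpace Ω} {μ : Measure Ω}
    (hm : m ≤ m0) [SigmaFinite (μ.trim hm)] {f : Ω → ℝ} (hf : Integrable f μ) :
    (fun ω => |(μ[f|m]) ω|) ≤ᵐ[μ] μ[(fun ω => |f ω|)|m] := by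
  filter_upwards [condExp_mono hf hf.abs (ae_of_all μ fun x => le_abs_self (f x)),
    EventuallyLE.trans (condExp_neg f m).symm.le
      (condExp_mono hf.neg hf.abs (ae_of_all μ fun x => neg_le_abs (f x)))] with x h1 h2
  simp only [Pi.neg_apply] at h2
  rw [abs_le]
  constructor <;> linarith

lemma tail_small' {Ω : Type*} {m0 : MeasurableSpace Ω} {P : Measure Ω}
    [IsProbabilityMeasure P] {g : Ω → ℝ} (hg : Integrable g P) (hg0 : ∀ ω, 0 ≤ g ω)
    {ε : ℝ} (hε : 0 < ε) :
    ∃ M : ℝ, ∀ X : Ω → ℝ, Integrable X P →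
      (∃ m : MeasurableSpace Ω, ∃ hm : m ≤ m0, (fun ω => |X ω|) ≤ᵐ[P] P[g|m]) →
      ∫ ω in {ω | M < |X ω|}, |X ω| ∂P < ε := by
  obtain ⟨δ, hδ, hδε⟩ := (memLp_one_iff_integrable.2 hg).eLpNorm_indicator_le le_rfl
    ENNReal.one_ne_top (half_pos hε)
  set I := ∫ ω, g ω ∂P with hI
  have hI0 : 0 ≤ I := integral_nonneg hg0
  refine ⟨I / δ + 1, fun X hX hex => ?_⟩
  obtain ⟨m, hm, hdom⟩ := hex
  letI _inst : MeasurableSpace Ω := m0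
  set M := I / δ + 1 with hM
  have hM0 : 0 < M := by positivity
  set h := P[g|m] with hh
  have hh0 : 0 ≤ᵐ[P] h := condExp_nonneg (ae_of_all _ hg0)
  have hhmeas : MeasurableSet[m] {ω | M < h ω} :=
    stronglyMeasurable_condExp.measurable measurableSet_Ioi
  have hA'meas : MeasurableSet[m0] {ω | M < h ω} := hm _ hhmeas
  -- step 1 : set inclusion a.e.
  have hsub : {ω | M < |X ω|} ≤ᵐ[P] {ω | M < h ω} := by
    rw [MeasureTheory.ae_le_set]
    refine measure_mono_null (fun ω hω => ?_) (ae_iff.1 hdom)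
    simp only [Set.mem_diff, Set.mem_setOf_eq, not_lt] at hω
    simp only [Set.mem_setOf_eq, not_le]
    exact lt_of_le_of_lt hω.2 hω.1
  have step2 : ∫ ω in {ω | M < |X ω|}, |X ω| ∂P ≤ ∫ ω in {ω | M < h ω}, |X ω| ∂P :=
    setIntegral_mono_set (μ := P) hX.abs.integrableOn
      (ae_restrict_of_ae (ae_of_all _ fun ω => abs_nonneg _)) hsub
  have step3 : ∫ ω in {ω | M < h ω}, |X ω| ∂P ≤ ∫ ω in {ω | M < h ω}, h ω ∂P :=
    setIntegral_mono_ae (μ := P) hX.abs.integrableOn integrable_condExp.integrableOn hdom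
  have step4 : ∫ ω in {ω | M < h ω}, h ω ∂P = ∫ ω in {ω | M < h ω}, g ω ∂P :=
    setIntegral_condExp hm hg hhmeas
  -- measure of the bad set is small
  have hPA : P {ω | M < h ω} ≤ ENNReal.ofReal δ := by
    have hconst : ∫ _ in {ω | M < h ω}, M ∂P ≤ ∫ ω in {ω | M < h ω}, h ω ∂P := by
      refine setIntegral_mono_on integrableOn_const
        integrable_condExp.integrableOn hA'meas fun ω hω => ?_
      exact le_of_lt hω
    rw [setIntegral_const, smul_eq_mul] at hconst
    have hle2 : ∫ ω in {ω | M < h ω}, g ω ∂P ≤ I :=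
      setIntegral_le_integral (μ := P) hg (ae_of_all _ hg0)
    have htR : (P {ω | M < h ω}).toReal ≤ δ := by
      have h1 : (P {ω | M < h ω}).toReal * M ≤ I := by
        calc (P {ω | M < h ω}).toReal * M ≤ ∫ ω in {ω | M < h ω}, h ω ∂P := hconst
          _ = _ := step4
          _ ≤ I := hle2
      have hp : (P {ω | M < h ω}).toReal ≤ I / M := (le_div_iff₀ hM0).2 h1
      have hδM : δ * M = I + δ := by rw [hM]; field_simp
      have : I / M ≤ δ := by rw [div_le_iff₀ hM0]; linarith
      linarith
    exact (ENNReal.le_ofReal_iff_toReal_le (measure_ne_top _ _) hδ.le).2 htR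
  have step6 : ∫ ω in {ω | M < h ω}, g ω ∂P ≤ ε / 2 := by
    have hind := hδε _ hA'meas hPA
    calc ∫ ω in {ω | M < h ω}, g ω ∂P
        = ∫ ω in {ω | M < h ω}, ‖g ω‖ ∂P := by
          refine setIntegral_congr_ae hA'meas (ae_of_all _ fun ω _ => ?_)
          rw [Real.norm_eq_abs, abs_of_nonneg (hg0 ω)]
      _ = (∫⁻ ω in {ω | M < h ω}, ‖g ω‖ₑ ∂P).toReal :=
          integral_norm_eq_lintegral_enorm hg.1.restrict
      _ = (eLpNorm (Set.indicator {ω | M < h ω} g) 1 P).toReal := by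
          rw [eLpNorm_indicator_eq_eLpNorm_restrict hA'meas, eLpNorm_one_eq_lintegral_enorm]
      _ ≤ (ENNReal.ofReal (ε/2)).toReal := ENNReal.toReal_mono ENNReal.ofReal_ne_top hind
      _ = ε / 2 := ENNReal.toReal_ofReal (by linarith)
  calc ∫ ω in {ω | M < |X ω|}, |X ω| ∂P ≤ ∫ ω in {ω | M < h ω}, g ω ∂P := by
        rw [← step4]; exact step2.trans step3
    _ ≤ ε / 2 := step6
    _ < ε := by linarith

private lemma dom_of_rep' {Ω : Type*} {m0 : MeasurableSpace Ω} {P : Measure Ω}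
    [IsProbabilityMeasure P] {m : MeasurableSpace Ω} (hm : m ≤ m0)
    {Xs Bs Bt a g : Ω → ℝ} (hBt : Integrable Bt P) (ha : Integrable a P)
    {c : ℝ} (hc : |c| ≤ 4)
    (hXs : ∀ ω, |Xs ω| ≤ |Bs ω| + a ω)
    (hrep : Bs =ᵐ[P] fun ω => c * (P[Bt|m]) ω)
    (hameas : StronglyMeasurable[m] a)
    (hgle : ∀ ω, 4 * |Bt ω| + a ω ≤ g ω) (hgint : Integrable g P) :
    (fun ω => |Xs ω|) ≤ᵐ[P] P[g|m] := by
  letI _i : MeasurableSpace Ω := m0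
  have h2 := abs_condexp_ae_le' hm hBt
  have h4 : a =ᵐ[P] P[a|m] :=
    Filter.EventuallyEq.of_eq (condExp_of_stronglyMeasurable hm hameas ha).symm
  have h5 := condExp_smul (m := m) (μ := P) (4 : ℝ) (fun ω => |Bt ω|)
  have h6 := condExp_add (μ := P) (m := m)
    (Integrable.smul (4 : ℝ) hBt.abs : Integrable ((4 : ℝ) • fun ω => |Bt ω|) P) ha
  have h7 := condExp_mono (m := m) (μ := P)
      ((Integrable.smul (4 : ℝ) hBt.abs).add ha) hgint
      (ae_of_all _ fun ω => by
        simpa [Pi.add_apply, Pi.smul_apply, smul_eq_mul] using hgle ω)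
  filter_upwards [hrep, h2, h4, h5, h6, h7] with ω e1 e2 e3 e5 e6 e7
  simp only [Pi.add_apply, Pi.smul_apply, Pi.sub_apply, smul_eq_mul] at e5 e6 e7
  calc |Xs ω| ≤ |Bs ω| + a ω := hXs ω
    _ = |c * (P[Bt|m]) ω| + a ω := by rw [e1]
    _ ≤ 4 * |(P[Bt|m]) ω| + a ω := by
        rw [abs_mul]
        nlinarith [abs_nonneg ((P[Bt|m]) ω), abs_nonneg c, abs_nonneg (c * (P[Bt|m]) ω)]
    _ ≤ 4 * (P[(fun ω => |Bt ω|)|m]) ω + (P[a|m]) ω := by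
        have := e2
        nlinarith [e2]
    _ = (P[((4 : ℝ) • fun ω => |Bt ω|)|m]) ω + (P[a|m]) ω := by rw [e5]
    _ = (P[(((4 : ℝ) • fun ω => |Bt ω|) + a)|m]) ω := by rw [e6]
    _ ≤ (P[g|m]) ω := e7

/-- A harness `Y` on `[0,1]` (with respect to some past-future filtration) is uniformly
integrable: `sup_{s ∈ [0,1]} E[|Y s| 1_{|Y s| > M}] → 0` as `M → ∞`. -/
theorem harness_uniformly_integrable
    {Ω : Type*} [mΩ : MeasurableSpace Ω] (P : Measure Ω) [IsProbabilityMeasure P]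
    (Y : ℝ → Ω → ℝ)
    (hint : ∀ t ∈ Set.Icc (0 : ℝ) 1, Integrable (Y t) P)
    (hrcll : ∀ᵐ ω ∂P,
      (∀ t ∈ Set.Ico (0 : ℝ) 1, Tendsto (fun s => Y s ω) (𝓝[>] t) (𝓝 (Y t ω))) ∧
      (∀ t ∈ Set.Ioc (0 : ℝ) 1, ∃ L : ℝ, Tendsto (fun s => Y s ω) (𝓝[<] t) (𝓝 L)))
    (ℱ : ℝ → ℝ → MeasurableSpace Ω)
    (hle : ∀ s u, ℱ s u ≤ mΩ)
    (hadapt : ∀ s ∈ Set.Icc (0 : ℝ) 1, ∀ u ∈ Set.Icc (0 : ℝ) 1, s < u →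
      ∀ r ∈ Set.Icc (0 : ℝ) 1, (r ≤ s ∨ u ≤ r) → Measurable[ℱ s u] (Y r))
    (hmono : ∀ s₁ ∈ Set.Icc (0 : ℝ) 1, ∀ s ∈ Set.Icc (0 : ℝ) 1,
      ∀ u ∈ Set.Icc (0 : ℝ) 1, ∀ u₁ ∈ Set.Icc (0 : ℝ) 1, s₁ ≤ s → s < u → u ≤ u₁ →
      ℱ s₁ u₁ ≤ ℱ s u)
    (hharness : ∀ s ∈ Set.Icc (0 : ℝ) 1, ∀ t ∈ Set.Icc (0 : ℝ) 1,
      ∀ u ∈ Set.Icc (0 : ℝ) 1, s < t → t < u →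
        P[Y t | ℱ s u]
          =ᵐ[P] fun ω => ((t - s) / (u - s)) * Y u ω + ((u - t) / (u - s)) * Y s ω) :
    ∀ ε > (0 : ℝ), ∃ M : ℝ, ∀ s ∈ Set.Icc (0 : ℝ) 1,
      ∫ ω in {ω | M < |Y s ω|}, |Y s ω| ∂P < ε := by
  intro ε hε
  letI _i : MeasurableSpace Ω := mΩ
  clear hrcll hmono
  have h0m : (0 : ℝ) ∈ Set.Icc (0 : ℝ) 1 := by norm_num
  have h1m : (1 : ℝ) ∈ Set.Icc (0 : ℝ) 1 := by norm_num
  have hqm : (1/4 : ℝ) ∈ Set.Icc (0 : ℝ) 1 := by norm_num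
  have hq3m : (3/4 : ℝ) ∈ Set.Icc (0 : ℝ) 1 := by norm_num
  set B : ℝ → Ω → ℝ := fun r ω => Y r ω - (1 - r) * Y 0 ω - r * Y 1 ω with hB
  have hBint : ∀ r ∈ Set.Icc (0 : ℝ) 1, Integrable (B r) P := fun r hr =>
    ((hint r hr).sub ((hint 0 h0m).const_mul _)).sub ((hint 1 h1m).const_mul _)
  set g : Ω → ℝ := fun ω => 4 * |B (1/4) ω| + 4 * |B (3/4) ω| + (|Y 0 ω| + |Y 1 ω|)
    with hgdef
  have hgint : Integrable g P :=
    (((hBint _ hqm).abs.const_mul 4).add ((hBint _ hq3m).abs.const_mul 4)).add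
      ((hint 0 h0m).abs.add (hint 1 h1m).abs)
  have hg0 : ∀ ω, 0 ≤ g ω := fun ω => by
    simp only [hgdef]
    positivity
  obtain ⟨M, hMtail⟩ := tail_small' hgint hg0 hε
  refine ⟨M, fun s hs => ?_⟩
  refine hMtail (Y s) (hint s hs) ?_
  obtain ⟨hs0, hs1⟩ := hs
  have hsm : s ∈ Set.Icc (0 : ℝ) 1 := ⟨hs0, hs1⟩
  -- pointwise bound |Y s| ≤ |B s| + (|Y 0| + |Y 1|)
  have hXs : ∀ ω, |Y s ω| ≤ |B s ω| + (|Y 0 ω| + |Y 1 ω|) := by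
    intro ω
    have e : Y s ω = B s ω + ((1 - s) * Y 0 ω + s * Y 1 ω) := by
      simp only [hB]; ring
    rw [e]
    have h1 : |(1 - s) * Y 0 ω + s * Y 1 ω| ≤ |1 - s| * |Y 0 ω| + |s| * |Y 1 ω| :=
      (abs_add_le _ _).trans (by rw [abs_mul, abs_mul])
    have h2 : |1 - s| ≤ 1 := by rw [abs_le]; constructor <;> linarith
    have h3 : |s| ≤ 1 := by rw [abs_le]; constructor <;> linarith
    have h4 := abs_add_le (B s ω) ((1 - s) * Y 0 ω + s * Y 1 ω)
    nlinarith [abs_nonneg (Y 0 ω), abs_nonneg (Y 1 ω), abs_nonneg (1 - s), abs_nonneg s]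
  rcases lt_or_ge s (3/4 : ℝ) with hlt | hge
  · -- use the filtration ℱ s 1 and the point 3/4
    have hne : (1 : ℝ) - s ≠ 0 := ne_of_gt (by linarith)
    have h01 : s < (1 : ℝ) := by linarith
    have hhar := hharness s hsm (3/4) hq3m 1 h1m hlt (by norm_num)
    have hY0m : Measurable[ℱ s 1] (Y 0) := hadapt s hsm 1 h1m h01 0 h0m (Or.inl hs0)
    have hY1m : Measurable[ℱ s 1] (Y 1) := hadapt s hsm 1 h1m h01 1 h1m (Or.inr le_rfl)
    have haint : Integrable (fun ω => (1 - (3/4 : ℝ)) * Y 0 ω + (3/4 : ℝ) * Y 1 ω) P :=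
      ((hint 0 h0m).const_mul _).add ((hint 1 h1m).const_mul _)
    have haff : P[(fun ω => (1 - (3/4 : ℝ)) * Y 0 ω + (3/4 : ℝ) * Y 1 ω)|ℱ s 1]
        =ᵐ[P] fun ω => (1 - (3/4 : ℝ)) * Y 0 ω + (3/4 : ℝ) * Y 1 ω := by
      letI : MeasurableSpace Ω := ℱ s 1
      exact Filter.EventuallyEq.of_eq (condExp_of_stronglyMeasurable (hle s 1)
        (((hY0m.const_mul _).add (hY1m.const_mul _)).stronglyMeasurable) haint)
    have hcsub : P[(fun ω => Y (3/4) ω - ((1 - (3/4 : ℝ)) * Y 0 ω + (3/4 : ℝ) * Y 1 ω))|ℱ s 1]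
        =ᵐ[P] P[Y (3/4)|ℱ s 1]
          - P[(fun ω => (1 - (3/4 : ℝ)) * Y 0 ω + (3/4 : ℝ) * Y 1 ω)|ℱ s 1] :=
      condExp_sub (hint _ hq3m) haint (ℱ s 1)
    have hfun : B (3/4) = fun ω => Y (3/4) ω - ((1 - (3/4 : ℝ)) * Y 0 ω + (3/4 : ℝ) * Y 1 ω) := by
      funext ω; simp only [hB]; ring
    have hBrep : P[B (3/4)|ℱ s 1] =ᵐ[P] fun ω => ((1 - (3/4 : ℝ)) / (1 - s)) * B s ω := by
      rw [hfun]
      filter_upwards [hcsub, hhar, haff] with ω e1 e2 e3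
      simp only [Pi.sub_apply] at e1
      rw [e1, e2, e3]
      simp only [hB]
      field_simp
      ring
    have hrep : B s =ᵐ[P] fun ω => (4 * (1 - s)) * (P[B (3/4)|ℱ s 1]) ω := by
      filter_upwards [hBrep] with ω e
      rw [e]
      field_simp
      try ring
      try norm_num
    have hc4 : |4 * (1 - s)| ≤ 4 := by
      rw [abs_of_nonneg (by linarith)]; linarith
    have hameas : StronglyMeasurable[ℱ s 1] (fun ω => |Y 0 ω| + |Y 1 ω|) := by
      letI : MeasurableSpace Ω := ℱ s 1
      exact ((hY0m.abs).add (hY1m.abs)).stronglyMeasurable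
    have hgle : ∀ ω, 4 * |B (3/4) ω| + (|Y 0 ω| + |Y 1 ω|) ≤ g ω := fun ω => by
      simp only [hgdef]
      have := abs_nonneg (B (1/4) ω)
      linarith
    exact ⟨ℱ s 1, hle s 1,
      dom_of_rep' (hle s 1) (hBint _ hq3m)
        ((hint 0 h0m).abs.add (hint 1 h1m).abs) hc4 hXs hrep hameas hgle hgint⟩
  · -- use the filtration ℱ 0 s and the point 1/4
    have hpos : (0 : ℝ) < s := by linarith
    have hne : s ≠ 0 := ne_of_gt hpos
    have hhar := hharness 0 h0m (1/4) hqm s hsm (by norm_num) (by linarith)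
    have hY0m : Measurable[ℱ 0 s] (Y 0) := hadapt 0 h0m s hsm hpos 0 h0m (Or.inl le_rfl)
    have hY1m : Measurable[ℱ 0 s] (Y 1) := hadapt 0 h0m s hsm hpos 1 h1m (Or.inr hs1)
    have haint : Integrable (fun ω => (1 - (1/4 : ℝ)) * Y 0 ω + (1/4 : ℝ) * Y 1 ω) P :=
      ((hint 0 h0m).const_mul _).add ((hint 1 h1m).const_mul _)
    have haff : P[(fun ω => (1 - (1/4 : ℝ)) * Y 0 ω + (1/4 : ℝ) * Y 1 ω)|ℱ 0 s]
        =ᵐ[P] fun ω => (1 - (1/4 : ℝ)) * Y 0 ω + (1/4 : ℝ) * Y 1 ω := by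
      letI : MeasurableSpace Ω := ℱ 0 s
      exact Filter.EventuallyEq.of_eq (condExp_of_stronglyMeasurable (hle 0 s)
        (((hY0m.const_mul _).add (hY1m.const_mul _)).stronglyMeasurable) haint)
    have hcsub : P[(fun ω => Y (1/4) ω - ((1 - (1/4 : ℝ)) * Y 0 ω + (1/4 : ℝ) * Y 1 ω))|ℱ 0 s]
        =ᵐ[P] P[Y (1/4)|ℱ 0 s]
          - P[(fun ω => (1 - (1/4 : ℝ)) * Y 0 ω + (1/4 : ℝ) * Y 1 ω)|ℱ 0 s] :=
      condExp_sub (hint _ hqm) haint (ℱ 0 s)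
    have hfun : B (1/4) = fun ω => Y (1/4) ω - ((1 - (1/4 : ℝ)) * Y 0 ω + (1/4 : ℝ) * Y 1 ω) := by
      funext ω; simp only [hB]; ring
    have hBrep : P[B (1/4)|ℱ 0 s] =ᵐ[P] fun ω => ((1/4 : ℝ) / s) * B s ω := by
      rw [hfun]
      filter_upwards [hcsub, hhar, haff] with ω e1 e2 e3
      simp only [Pi.sub_apply] at e1
      rw [e1, e2, e3]
      simp only [hB]
      field_simp
      ring
    have hrep : B s =ᵐ[P] fun ω => (4 * s) * (P[B (1/4)|ℱ 0 s]) ω := by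
      filter_upwards [hBrep] with ω e
      rw [e]
      field_simp
      try ring
      try norm_num
    have hc4 : |4 * s| ≤ 4 := by
      rw [abs_of_nonneg (by linarith)]; linarith
    have hameas : StronglyMeasurable[ℱ 0 s] (fun ω => |Y 0 ω| + |Y 1 ω|) := by
      letI : MeasurableSpace Ω := ℱ 0 s
      exact ((hY0m.abs).add (hY1m.abs)).stronglyMeasurable
    have hgle : ∀ ω, 4 * |B (1/4) ω| + (|Y 0 ω| + |Y 1 ω|) ≤ g ω := fun ω => by
      simp only [hgdef]
      have := abs_nonneg (B (3/4) ω)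
      linarith
    exact ⟨ℱ 0 s, hle 0 s,
      dom_of_rep' (hle 0 s) (hBint _ hqm)
        ((hint 0 h0m).abs.add (hint 1 h1m).abs) hc4 hXs hrep hameas hgle hgint⟩
end

section
/- If Y = (Y(t))_{t in [0,1]} is a harness with respect to some past-future filtration, then Y is continuous in probability; in fact, for every t in [0,1], P(lim_{s -> t} Y(s) = Y(t)) = 1, i.e., almost surely the left limit Y(t-) equals Y(t). -/
open MeasureTheory Filter Topology

lemma harness_aux_seq {s t : ℝ} (h : s < t) :
    ∃ r : ℕ → ℝ, (∀ n, s < r n) ∧ (∀ n, r n < t) ∧ Monotone r ∧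
      Tendsto r atTop (𝓝[<] t) := by
  have hd : 0 < t - s := sub_pos.mpr h
  have hlt : ∀ n : ℕ, t - (t - s) / ((n : ℝ) + 2) < t := by
    intro n
    have : 0 < (t - s) / ((n : ℝ) + 2) := by positivity
    linarith
  refine ⟨fun n => t - (t - s) / ((n : ℝ) + 2), ?_, hlt, ?_, ?_⟩
  · intro n
    have h2 : (1:ℝ) < (n : ℝ) + 2 := by
      have := Nat.cast_nonneg (α := ℝ) n; linarith
    have := div_lt_self hd h2
    linarith
  · intro i j hij
    have hcast : (i : ℝ) + 2 ≤ (j : ℝ) + 2 := by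
      have : (i : ℝ) ≤ (j : ℝ) := by exact_mod_cast hij
      linarith
    have hpos : (0:ℝ) < (i : ℝ) + 2 := by positivity
    have := div_le_div_of_nonneg_left hd.le hpos hcast
    simp only
    linarith
  · have hden : Tendsto (fun n : ℕ => (n : ℝ) + 2) atTop atTop :=
      tendsto_atTop_add_const_right _ 2 tendsto_natCast_atTop_atTop
    have h0 : Tendsto (fun n : ℕ => (t - s) / ((n : ℝ) + 2)) atTop (𝓝 0) :=
      Tendsto.div_atTop tendsto_const_nhds hden
    have h4 : Tendsto (fun n : ℕ => t - (t - s) / ((n : ℝ) + 2)) atTop (𝓝 t) := by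
      simpa using tendsto_const_nhds.sub h0
    exact tendsto_nhdsWithin_of_tendsto_nhds_of_eventually_within _ h4
      (Eventually.of_forall fun n => hlt n)

lemma harness_aux_limit {Ω : Type*} {m : MeasurableSpace Ω} (f : ℕ → Ω → ℝ)
    (hf : ∀ n, Measurable (f n)) :
    ∃ g : Ω → ℝ, Measurable g ∧
      ∀ ω L, Tendsto (fun n => f n ω) atTop (𝓝 L) → g ω = L := by
  set C : Set Ω := {ω | ∃ c, Tendsto (fun n => f n ω) atTop (𝓝 c)} with hC
  have hCm : MeasurableSet C := measurableSet_exists_tendsto hf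
  have hex : ∀ ω, ∃ l, Tendsto (fun n => C.indicator (f n) ω) atTop (𝓝 l) := by
    intro ω
    by_cases hω : ω ∈ C
    · obtain ⟨l, hl⟩ := hω
      exact ⟨l, hl.congr fun n =>
        (Set.indicator_of_mem (show ω ∈ C from ⟨l, hl⟩) _).symm⟩
    · refine ⟨0, ?_⟩
      simp only [Set.indicator_of_notMem hω]
      exact tendsto_const_nhds
  refine ⟨fun ω => limUnder atTop fun n => C.indicator (f n) ω, ?_, ?_⟩
  · exact measurable_of_tendsto_metrizable (fun n => (hf n).indicator hCm)
      (tendsto_pi_nhds.2 fun ω => tendsto_nhds_limUnder (hex ω))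
  · intro ω L hL
    have hmem : ω ∈ C := ⟨L, hL⟩
    have h1 : Tendsto (fun n => C.indicator (f n) ω) atTop (𝓝 L) :=
      hL.congr fun n => (Set.indicator_of_mem hmem _).symm
    exact tendsto_nhds_unique (tendsto_nhds_limUnder (hex ω)) h1

/-- A harness `Y` on `[0,1]` (with respect to some past-future filtration) is continuous in
probability; in fact, for every `t ∈ [0,1]`, almost surely `lim_{s → t} Y s = Y t`
(the limit being taken along `s ∈ [0,1]`), i.e. almost surely the left limit `Y(t-)`
equals `Y(t)`. -/
theorem harness_continuous_in_probability
    {Ω : Type*} [mΩ : MeasurableSpace Ω] (P : Measure Ω) [IsProbabilityMeasure P]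
    (Y : ℝ → Ω → ℝ)
    (hint : ∀ t ∈ Set.Icc (0 : ℝ) 1, Integrable (Y t) P)
    (hrcll : ∀ᵐ ω ∂P,
      (∀ t ∈ Set.Ico (0 : ℝ) 1, Tendsto (fun s => Y s ω) (𝓝[>] t) (𝓝 (Y t ω))) ∧
      (∀ t ∈ Set.Ioc (0 : ℝ) 1, ∃ L : ℝ, Tendsto (fun s => Y s ω) (𝓝[<] t) (𝓝 L)))
    (ℱ : ℝ → ℝ → MeasurableSpace Ω)
    (hle : ∀ s u, ℱ s u ≤ mΩ)
    (hadapt : ∀ s ∈ Set.Icc (0 : ℝ) 1, ∀ u ∈ Set.Icc (0 : ℝ) 1, s < u →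
      ∀ r ∈ Set.Icc (0 : ℝ) 1, (r ≤ s ∨ u ≤ r) → Measurable[ℱ s u] (Y r))
    (hmono : ∀ s₁ ∈ Set.Icc (0 : ℝ) 1, ∀ s ∈ Set.Icc (0 : ℝ) 1,
      ∀ u ∈ Set.Icc (0 : ℝ) 1, ∀ u₁ ∈ Set.Icc (0 : ℝ) 1, s₁ ≤ s → s < u → u ≤ u₁ →
      ℱ s₁ u₁ ≤ ℱ s u)
    (hharness : ∀ s ∈ Set.Icc (0 : ℝ) 1, ∀ t ∈ Set.Icc (0 : ℝ) 1,
      ∀ u ∈ Set.Icc (0 : ℝ) 1, s < t → t < u →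
        P[Y t | ℱ s u]
          =ᵐ[P] fun ω => ((t - s) / (u - s)) * Y u ω + ((u - t) / (u - s)) * Y s ω) :
    ∀ t ∈ Set.Icc (0 : ℝ) 1,
      (∀ᵐ ω ∂P, Tendsto (fun s => Y s ω) (𝓝[Set.Icc (0 : ℝ) 1] t) (𝓝 (Y t ω))) ∧
      (t ≠ 0 → ∀ᵐ ω ∂P, Function.leftLim (fun s => Y s ω) t = Y t ω) := by
  intro t ht
  obtain ⟨ht0, ht1⟩ := ht
  rcases eq_or_lt_of_le ht0 with h0 | htpos
  · -- case t = 0 : only right-continuity is needed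
    subst h0
    constructor
    · filter_upwards [hrcll] with ω hω
      have hr := hω.1 0 ⟨le_rfl, one_pos⟩
      have hsub : Set.Icc (0:ℝ) 1 ⊆ {(0:ℝ)} ∪ (Set.Ioi 0 ∩ Set.Icc 0 1) := by
        intro x hx
        rcases eq_or_lt_of_le hx.1 with h' | h'
        · exact Or.inl (by simp [← h'])
        · exact Or.inr ⟨h', hx⟩
      have hle' : 𝓝[Set.Icc (0:ℝ) 1] 0 ≤
          𝓝[{(0:ℝ)}] 0 ⊔ 𝓝[Set.Ioi 0 ∩ Set.Icc 0 1] 0 :=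
        (nhdsWithin_mono 0 hsub).trans (nhdsWithin_union _ _ _).le
      refine Tendsto.mono_left (tendsto_sup.2 ⟨?_, ?_⟩) hle'
      · rw [nhdsWithin_singleton]; exact tendsto_pure_nhds _ 0
      · exact hr.mono_left (nhdsWithin_mono 0 Set.inter_subset_left)
    · intro h; exact absurd rfl h
  · -- main case : 0 < t ≤ 1
    have htI : t ∈ Set.Icc (0:ℝ) 1 := ⟨ht0, ht1⟩
    obtain ⟨q, hq1, hq2, hq3, hq4⟩ := harness_aux_seq htpos
    have hqmem : ∀ n, q n ∈ Set.Icc (0:ℝ) 1 :=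
      fun n => ⟨(hq1 n).le, (hq2 n).le.trans ht1⟩
    have hYq : ∀ n, Measurable[⨆ n, ℱ (q n) t] (Y (q n)) := fun n =>
      (hadapt (q n) (hqmem n) t htI (hq2 n) (q n) (hqmem n) (Or.inl le_rfl)).mono
        (le_iSup (fun n => ℱ (q n) t) n) le_rfl
    have hm'le : (⨆ n, ℱ (q n) t) ≤ mΩ := iSup_le fun n => hle _ _
    obtain ⟨g, hgm', hglim⟩ :=
      harness_aux_limit (m := ⨆ n, ℱ (q n) t) (fun n => Y (q n)) hYq
    have hgmΩ : Measurable g := hgm'.mono hm'le le_rfl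
    -- a.e., Y has left limit g ω at t
    have hWae : ∀ᵐ ω ∂P, Tendsto (fun s' => Y s' ω) (𝓝[<] t) (𝓝 (g ω)) := by
      filter_upwards [hrcll] with ω hω
      obtain ⟨L, hL⟩ := hω.2 t ⟨htpos, ht1⟩
      have hqt : Tendsto (fun n => Y (q n) ω) atTop (𝓝 L) := hL.comp hq4
      rw [hglim ω L hqt]
      exact hL
    -- key step : conditionally on ℱ s t, the left limit averages to Y t
    have keyG : ∀ s : ℝ, 0 ≤ s → s < t →
        Integrable g P ∧ P[g | ℱ s t] =ᵐ[P] Y t := by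
      intro s hs0 hst
      have hsI : s ∈ Set.Icc (0:ℝ) 1 := ⟨hs0, hst.le.trans ht1⟩
      have hts0 : t - s ≠ 0 := sub_ne_zero_of_ne hst.ne'
      set c : ℝ := (s + t) / 2 with hcdef
      have hsc : s < c := by rw [hcdef]; linarith
      have hct : c < t := by rw [hcdef]; linarith
      have hcI : c ∈ Set.Icc (0:ℝ) 1 := ⟨hs0.trans hsc.le, hct.le.trans ht1⟩
      obtain ⟨r, hr1, hr2, hr3, hr4⟩ := harness_aux_seq hct
      have hrI : ∀ n, r n ∈ Set.Icc (0:ℝ) 1 :=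
        fun n => ⟨hcI.1.trans (hr1 n).le, (hr2 n).le.trans ht1⟩
      have hsr : ∀ n, s < r n := fun n => hsc.trans (hr1 n)
      have hcs0 : c - s ≠ 0 := sub_ne_zero_of_ne hsc.ne'
      set R : Ω → ℝ := (c - s)⁻¹ • (Y c - Y s) with hRdef
      have hRint : Integrable R P := ((hint c hcI).sub (hint s hsI)).smul ((c - s)⁻¹)
      -- conditional expectation of R given ℱ s u for c < u ≤ t
      have hcomp : ∀ u : ℝ, u ∈ Set.Icc (0:ℝ) 1 → c < u → u ≤ t →
          P[R | ℱ s u] =ᵐ[P] fun ω => (u - s)⁻¹ * (Y u ω - Y s ω) := by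
        intro u huI hcu hut
        have hsu : s < u := hsc.trans hcu
        have hus0 : u - s ≠ 0 := sub_ne_zero_of_ne hsu.ne'
        have e1 := condExp_smul (μ := P) (m := ℱ s u) ((c - s)⁻¹) (Y c - Y s)
        have e2 := condExp_sub (μ := P) (m := ℱ s u) (hint c hcI) (hint s hsI)
        have e3 := hharness s hsI c hcI u huI hsc hcu
        have e4 : P[Y s | ℱ s u] = Y s :=
          condExp_of_stronglyMeasurable (hle s u)
            ((hadapt s hsI u huI hsu s hsI (Or.inl le_rfl)).stronglyMeasurable)
            (hint s hsI)
        rw [hRdef]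
        filter_upwards [e1, e2, e3] with ω h1 h2 h3
        rw [h1, Pi.smul_apply, smul_eq_mul, h2, Pi.sub_apply, h3, e4]
        field_simp
        ring
      have hXcond : ∀ n, P[R | ℱ s (r n)]
          =ᵐ[P] fun ω => (r n - s)⁻¹ * (Y (r n) ω - Y s ω) :=
        fun n => hcomp (r n) (hrI n) (hr1 n) (hr2 n).le
      set L' : Ω → ℝ := fun ω => (t - s)⁻¹ * (g ω - Y s ω) with hL'def
      have haeX : ∀ᵐ ω ∂P,
          Tendsto (fun n => (P[R | ℱ s (r n)]) ω) atTop (𝓝 (L' ω)) := by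
        filter_upwards [hWae, ae_all_iff.2 hXcond] with ω hW hXω
        have h1 : Tendsto (fun n => Y (r n) ω) atTop (𝓝 (g ω)) := hW.comp hr4
        have hrt : Tendsto (fun n => r n) atTop (𝓝 t) := hr4.mono_right nhdsWithin_le_nhds
        have h2 : Tendsto (fun n => (r n - s)⁻¹) atTop (𝓝 ((t - s)⁻¹)) :=
          (hrt.sub_const s).inv₀ hts0
        have h3 := h2.mul (h1.sub_const (Y s ω))
        rw [hL'def]
        exact h3.congr fun n => (hXω n).symm
      have hXmeas : ∀ n, AEStronglyMeasurable (P[R | ℱ s (r n)]) P := fun n =>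
        (stronglyMeasurable_condExp.mono (hle s (r n))).aestronglyMeasurable
      have hL'meas : AEStronglyMeasurable L' P :=
        ((hgmΩ.aestronglyMeasurable.sub (hint s hsI).1).const_mul _)
      have hL'mem : MemLp L' 1 P := by
        refine ⟨hL'meas, ?_⟩
        have hbd : ∀ n, eLpNorm (P[R | ℱ s (r n)]) 1 P ≤ eLpNorm R 1 P :=
          fun n => eLpNorm_one_condExp_le_eLpNorm _
        calc eLpNorm L' 1 P
            ≤ atTop.liminf fun n => eLpNorm (P[R | ℱ s (r n)]) 1 P :=
              Lp.eLpNorm_lim_le_liminf_eLpNorm hXmeas L' haeX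
          _ ≤ atTop.liminf fun _ => eLpNorm R 1 P :=
              liminf_le_liminf (Eventually.of_forall hbd)
          _ = eLpNorm R 1 P := liminf_const _
          _ < ⊤ := (memLp_one_iff_integrable.2 hRint).2
      have hL'int : Integrable L' P := memLp_one_iff_integrable.1 hL'mem
      have hui : UniformIntegrable (fun n => P[R | ℱ s (r n)]) 1 P :=
        hRint.uniformIntegrable_condExp fun n => hle s (r n)
      have hVitali : Tendsto (fun n => eLpNorm (P[R | ℱ s (r n)] - L') 1 P)
          atTop (𝓝 0) :=
        tendsto_Lp_finite_of_tendsto_ae le_rfl ENNReal.one_ne_top hXmeas hL'mem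
          hui.2.1 haeX
      have htower : ∀ n, P[P[R | ℱ s (r n)] | ℱ s t] =ᵐ[P] P[R | ℱ s t] := by
        intro n
        have hlest : ℱ s t ≤ ℱ s (r n) :=
          hmono s hsI s hsI (r n) (hrI n) t htI le_rfl (hsr n) (hr2 n).le
        exact condExp_condExp_of_le hlest (hle s (r n))
      have hzero : eLpNorm (P[R | ℱ s t] - P[L' | ℱ s t]) 1 P = 0 := by
        have hb : ∀ n, eLpNorm (P[R | ℱ s t] - P[L' | ℱ s t]) 1 P
            ≤ eLpNorm (P[R | ℱ s (r n)] - L') 1 P := by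
          intro n
          have h1 : P[R | ℱ s t] - P[L' | ℱ s t]
              =ᵐ[P] P[P[R | ℱ s (r n)] - L' | ℱ s t] := by
            have hsub := condExp_sub (μ := P) (m := ℱ s t)
              (integrable_condExp (m := ℱ s (r n)) (f := R)) hL'int
            exact ((htower n).symm.sub (EventuallyEq.refl _ _)).trans hsub.symm
          calc eLpNorm (P[R | ℱ s t] - P[L' | ℱ s t]) 1 P
              = eLpNorm (P[P[R | ℱ s (r n)] - L' | ℱ s t]) 1 P :=
                eLpNorm_congr_ae h1
            _ ≤ eLpNorm (P[R | ℱ s (r n)] - L') 1 P :=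
                eLpNorm_one_condExp_le_eLpNorm _
        exact le_antisymm (ge_of_tendsto' hVitali hb) (zero_le)
      have hLR : P[L' | ℱ s t] =ᵐ[P] P[R | ℱ s t] := by
        have hsm : AEStronglyMeasurable (P[R | ℱ s t] - P[L' | ℱ s t]) P :=
          ((stronglyMeasurable_condExp.mono (hle s t)).aestronglyMeasurable).sub
            ((stronglyMeasurable_condExp.mono (hle s t)).aestronglyMeasurable)
        have h := (eLpNorm_eq_zero_iff hsm one_ne_zero).1 hzero
        filter_upwards [h] with ω hω
        have h' : (P[R | ℱ s t]) ω - (P[L' | ℱ s t]) ω = 0 := by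
          simpa using hω
        linarith
      have hRt : P[R | ℱ s t] =ᵐ[P] fun ω => (t - s)⁻¹ * (Y t ω - Y s ω) :=
        hcomp t htI hct le_rfl
      have hgfun : g = Y s + (t - s) • L' := by
        funext ω
        simp only [Pi.add_apply, Pi.smul_apply, smul_eq_mul, hL'def]
        rw [← mul_assoc, mul_inv_cancel₀ hts0, one_mul]
        ring
      have hgint : Integrable g P := by
        rw [hgfun]
        exact (hint s hsI).add (hL'int.smul (t - s))
      refine ⟨hgint, ?_⟩
      have e1 : P[Y s + (t - s) • L' | ℱ s t]
          =ᵐ[P] P[Y s | ℱ s t] + P[(t - s) • L' | ℱ s t] :=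
        condExp_add (hint s hsI) (hL'int.smul (t - s)) (ℱ s t)
      have e2 : P[(t - s) • L' | ℱ s t] =ᵐ[P] (t - s) • P[L' | ℱ s t] :=
        condExp_smul _ _ (ℱ s t)
      have e3 : P[Y s | ℱ s t] = Y s :=
        condExp_of_stronglyMeasurable (hle s t)
          ((hadapt s hsI t htI hst s hsI (Or.inl le_rfl)).stronglyMeasurable)
          (hint s hsI)
      rw [hgfun]
      filter_upwards [e1, e2, hLR, hRt] with ω h1 h2 h3 h4
      rw [h1, Pi.add_apply, e3, h2, Pi.smul_apply, smul_eq_mul, h3, h4,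
        ← mul_assoc, mul_inv_cancel₀ hts0, one_mul]
      ring
    -- Lévy's upward theorem along the filtration n ↦ ℱ (q n) t
    have hgint : Integrable g P := (keyG 0 le_rfl htpos).1
    set 𝒢 : Filtration ℕ mΩ :=
      ⟨fun n => ℱ (q n) t,
        fun i j hij => hmono (q i) (hqmem i) (q j) (hqmem j) t htI t htI
          (hq3 hij) (hq2 j) le_rfl,
        fun n => hle _ _⟩ with h𝒢
    have hgmeas : StronglyMeasurable[⨆ n, 𝒢 n] g := hgm'.stronglyMeasurable
    have hlevy := hgint.tendsto_ae_condExp hgmeas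
    have hconds : ∀ n, P[g | 𝒢 n] =ᵐ[P] Y t :=
      fun n => (keyG (q n) (hqmem n).1 (hq2 n)).2
    have hfinal : ∀ᵐ ω ∂P, g ω = Y t ω := by
      filter_upwards [hlevy, ae_all_iff.2 hconds] with ω h1 h2
      have h3 : Tendsto (fun _ : ℕ => Y t ω) atTop (𝓝 (g ω)) :=
        h1.congr fun n => h2 n
      exact tendsto_nhds_unique h3 tendsto_const_nhds
    constructor
    · filter_upwards [hfinal, hWae, hrcll] with ω h1 h2 hrc
      have hleft : Tendsto (fun s' => Y s' ω) (𝓝[<] t) (𝓝 (Y t ω)) := h1 ▸ h2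
      have hsub : Set.Icc (0:ℝ) 1 ⊆
          Set.Iio t ∪ ({t} ∪ (Set.Ioi t ∩ Set.Icc 0 1)) := by
        intro x hx
        rcases lt_trichotomy x t with h' | h' | h'
        · exact Or.inl h'
        · exact Or.inr (Or.inl h')
        · exact Or.inr (Or.inr ⟨h', hx⟩)
      have hle' : 𝓝[Set.Icc (0:ℝ) 1] t ≤
          𝓝[Set.Iio t] t ⊔ (𝓝[{t}] t ⊔ 𝓝[Set.Ioi t ∩ Set.Icc 0 1] t) := by
        refine (nhdsWithin_mono t hsub).trans ?_
        rw [nhdsWithin_union, nhdsWithin_union]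
      refine Tendsto.mono_left (tendsto_sup.2 ⟨hleft, tendsto_sup.2 ⟨?_, ?_⟩⟩) hle'
      · rw [nhdsWithin_singleton]; exact tendsto_pure_nhds _ t
      · rcases eq_or_lt_of_le ht1 with h1' | h1'
        · have hempty : Set.Ioi t ∩ Set.Icc (0:ℝ) 1 = ∅ := by
            ext x
            simp only [Set.mem_inter_iff, Set.mem_Ioi, Set.mem_Icc, Set.mem_empty_iff_false,
              iff_false, not_and, and_imp]
            intro hx h0x h1x
            linarith
          rw [hempty, nhdsWithin_empty]
          exact tendsto_bot
        · exact (hrc.1 t ⟨ht0, h1'⟩).mono_left (nhdsWithin_mono t Set.inter_subset_left)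
    · intro _
      filter_upwards [hfinal, hWae] with ω h1 h2
      exact leftLim_eq_of_tendsto (h1 ▸ h2)
end

section
/- Let Y = (Y(t))_{t in [0,1]} be a harness with respect to a past-future filtration (F_{t,T'}). Then for all s < t < T' in [0,1], almost surely E[Y(t-) | F_{s,T'}] = ((t - s)/(T' - s)) Y(T') + ((T' - t)/(T' - s)) Y(s) = E[Y(t) | F_{s,T'}], where Y(t-) is the almost sure left limit lim_{u up t} Y(u). -/
open MeasureTheory Filter Topology

/-- For a harness `Y` on `[0,1]` with respect to a past-future filtration `ℱ`, for all
`s < t < T'` in `[0,1]`, almost surely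
`E[Y(t-) | ℱ s T'] = ((t-s)/(T'-s)) Y(T') + ((T'-t)/(T'-s)) Y(s) = E[Y t | ℱ s T']`,
where `Y(t-)` is the a.s. left limit of `Y` at `t`. -/
theorem harness_condexp_leftLim
    {Ω : Type*} [mΩ : MeasurableSpace Ω] (P : Measure Ω) [IsProbabilityMeasure P]
    (Y : ℝ → Ω → ℝ)
    (hint : ∀ t ∈ Set.Icc (0 : ℝ) 1, Integrable (Y t) P)
    (hrcll : ∀ᵐ ω ∂P,
      (∀ t ∈ Set.Ico (0 : ℝ) 1, Tendsto (fun s => Y s ω) (𝓝[>] t) (𝓝 (Y t ω))) ∧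
      (∀ t ∈ Set.Ioc (0 : ℝ) 1, ∃ L : ℝ, Tendsto (fun s => Y s ω) (𝓝[<] t) (𝓝 L)))
    (ℱ : ℝ → ℝ → MeasurableSpace Ω)
    (hle : ∀ s u, ℱ s u ≤ mΩ)
    (hadapt : ∀ s ∈ Set.Icc (0 : ℝ) 1, ∀ u ∈ Set.Icc (0 : ℝ) 1, s < u →
      ∀ r ∈ Set.Icc (0 : ℝ) 1, (r ≤ s ∨ u ≤ r) → Measurable[ℱ s u] (Y r))
    (hmono : ∀ s₁ ∈ Set.Icc (0 : ℝ) 1, ∀ s ∈ Set.Icc (0 : ℝ) 1,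
      ∀ u ∈ Set.Icc (0 : ℝ) 1, ∀ u₁ ∈ Set.Icc (0 : ℝ) 1, s₁ ≤ s → s < u → u ≤ u₁ →
      ℱ s₁ u₁ ≤ ℱ s u)
    (hharness : ∀ s ∈ Set.Icc (0 : ℝ) 1, ∀ t ∈ Set.Icc (0 : ℝ) 1,
      ∀ u ∈ Set.Icc (0 : ℝ) 1, s < t → t < u →
        P[Y t | ℱ s u]
          =ᵐ[P] fun ω => ((t - s) / (u - s)) * Y u ω + ((u - t) / (u - s)) * Y s ω) :
    ∀ s ∈ Set.Icc (0 : ℝ) 1, ∀ t ∈ Set.Icc (0 : ℝ) 1, ∀ T' ∈ Set.Icc (0 : ℝ) 1,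
      s < t → t < T' →
      (P[(fun ω => Function.leftLim (fun r => Y r ω) t) | ℱ s T']
          =ᵐ[P] fun ω => ((t - s) / (T' - s)) * Y T' ω + ((T' - t) / (T' - s)) * Y s ω) ∧
      (P[(fun ω => Function.leftLim (fun r => Y r ω) t) | ℱ s T']
          =ᵐ[P] P[Y t | ℱ s T']) := by
  intro s hs t ht T' hT' hst htT'
  have hts : (0:ℝ) < t - s := sub_pos.2 hst
  have hTt : (0:ℝ) < T' - t := sub_pos.2 htT'
  have hTs : (0:ℝ) < T' - s := sub_pos.2 (hst.trans htT')
  -- the approximating sequence uₙ ↑ t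
  set u : ℕ → ℝ := fun n => t - (t - s) / (n + 2) with hu_def
  have hpos : ∀ n : ℕ, (0:ℝ) < (n:ℝ) + 2 := fun n => by positivity
  have hun_lt : ∀ n, u n < t := by
    intro n
    have : (0:ℝ) < (t - s) / ((n:ℝ) + 2) := div_pos hts (hpos n)
    simp only [hu_def]; linarith
  have hsun : ∀ n, s < u n := by
    intro n
    have h2 : (t - s) / ((n:ℝ) + 2) < t - s := by
      apply div_lt_self hts
      have : (0:ℝ) ≤ (n:ℝ) := Nat.cast_nonneg n
      linarith
    simp only [hu_def]; linarith
  have huI : ∀ n, u n ∈ Set.Icc (0:ℝ) 1 :=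
    fun n => ⟨hs.1.trans (hsun n).le, (hun_lt n).le.trans ht.2⟩
  have hu_mono : Monotone u := by
    intro n m hnm
    have : (t - s) / ((m:ℝ) + 2) ≤ (t - s) / ((n:ℝ) + 2) := by
      apply div_le_div_of_nonneg_left hts.le (hpos n)
      exact_mod_cast by omega
    simp only [hu_def]; linarith
  have hu_tendsto_nhds : Tendsto u atTop (𝓝 t) := by
    have h0 : Tendsto (fun n : ℕ => (t - s) / ((n:ℝ) + 2)) atTop (𝓝 0) := by
      apply Tendsto.div_atTop tendsto_const_nhds
      exact tendsto_atTop_add_const_right _ _ tendsto_natCast_atTop_atTop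
    have : Tendsto (fun n : ℕ => t - (t - s) / ((n:ℝ) + 2)) atTop (𝓝 (t - 0)) :=
      tendsto_const_nhds.sub h0
    simpa using this
  have hu_tendsto : Tendsto u atTop (𝓝[<] t) :=
    tendsto_nhdsWithin_of_tendsto_nhds_of_eventually_within u hu_tendsto_nhds
      (Eventually.of_forall fun n => hun_lt n)
  -- the auxiliary point v ∈ (t, T')
  set v : ℝ := (t + T') / 2 with hv_def
  have htv : t < v := by simp only [hv_def]; linarith
  have hvT : v < T' := by simp only [hv_def]; linarith
  have hvI : v ∈ Set.Icc (0:ℝ) 1 :=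
    ⟨ht.1.trans htv.le, hvT.le.trans hT'.2⟩
  -- the filtration Gₙ = ℱ (u n) T'
  let G : Filtration ℕ mΩ :=
    { seq := fun n => ℱ (u n) T'
      mono' := fun n m hnm =>
        hmono (u n) (huI n) (u m) (huI m) T' hT' T' hT' (hu_mono hnm)
          ((hun_lt m).trans htT') le_rfl
      le' := fun n => hle _ _ }
  -- the closing random variable f
  set f : Ω → ℝ := fun ω => (T' - v)⁻¹ * (Y v ω - Y T' ω) with hf_def
  have hf_int : Integrable f P := ((hint v hvI).sub (hint T' hT')).const_mul _
  -- key computation: E[f | ℱ a T'] = (T'-a)⁻¹ (Y a - Y T') for a < t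
  have key : ∀ a ∈ Set.Icc (0:ℝ) 1, a < t →
      P[f | ℱ a T'] =ᵐ[P] fun ω => (T' - a)⁻¹ * (Y a ω - Y T' ω) := by
    intro a haI hat
    have hav : a < v := hat.trans htv
    have haT : a < T' := hav.trans hvT
    have hTa : (0:ℝ) < T' - a := sub_pos.2 haT
    have hTv : (0:ℝ) < T' - v := sub_pos.2 hvT
    have hmeasT : StronglyMeasurable[ℱ a T'] (Y T') :=
      (hadapt a haI T' hT' haT T' hT' (Or.inr le_rfl)).stronglyMeasurable
    have hT'cond : P[Y T' | ℱ a T'] = Y T' :=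
      condExp_of_stronglyMeasurable (hle a T') hmeasT (hint T' hT')
    have h1 : P[f | ℱ a T'] =ᵐ[P]
        fun ω => (T' - v)⁻¹ • (P[Y v | ℱ a T'] - P[Y T' | ℱ a T']) ω := by
      have hfe : f = (T' - v)⁻¹ • (Y v - Y T') := by
        funext ω; simp [hf_def, smul_eq_mul]
      rw [hfe]
      have ha := condExp_smul (μ := P) (m := ℱ a T') ((T' - v)⁻¹) (Y v - Y T')
      have hb := condExp_sub (μ := P) (m := ℱ a T') (hint v hvI) (hint T' hT')
      filter_upwards [ha, hb] with ω h₁ h₂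
      simp only [Pi.smul_apply, Pi.sub_apply] at h₁ h₂ ⊢
      rw [h₁, h₂]
    refine h1.trans ?_
    filter_upwards [hharness a haI v hvI T' hT' hav hvT] with ω hω
    simp only [Pi.sub_apply, smul_eq_mul, hω, hT'cond]
    field_simp
    ring
  have hGn : ∀ n, P[f | (G n : MeasurableSpace Ω)] =ᵐ[P]
      fun ω => (T' - u n)⁻¹ * (Y (u n) ω - Y T' ω) :=
    fun n => key (u n) (huI n) (hun_lt n)
  -- Lévy's upward theorem
  have hlevy := tendsto_ae_condExp (μ := P) (ℱ := G) f
  -- identify the limit with the left limit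
  have hmsup_le : (⨆ n, (G n : MeasurableSpace Ω)) ≤ mΩ := iSup_le fun n => hle _ _
  have hsle : ℱ s T' ≤ ⨆ n, (G n : MeasurableSpace Ω) :=
    le_trans
      (hmono s hs (u 0) (huI 0) T' hT' T' hT' (hsun 0).le ((hun_lt 0).trans htT') le_rfl)
      (le_iSup (fun n => (G n : MeasurableSpace Ω)) 0)
  have hleft : (fun ω => Function.leftLim (fun r => Y r ω) t) =ᵐ[P]
      fun ω => Y T' ω + (T' - t) * (P[f | ⨆ n, (G n : MeasurableSpace Ω)]) ω := by
    have hae : ∀ᵐ ω ∂P, ∀ n,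
        (P[f | (G n : MeasurableSpace Ω)]) ω = (T' - u n)⁻¹ * (Y (u n) ω - Y T' ω) :=
      ae_all_iff.2 fun n => hGn n
    filter_upwards [hae, hlevy, hrcll] with ω h1 h2 h3
    obtain ⟨L, hL⟩ := h3.2 t ⟨lt_of_le_of_lt hs.1 hst, ht.2⟩
    have hLlim : Function.leftLim (fun r => Y r ω) t = L :=
      leftLim_eq_of_tendsto hL
    have hYn : Tendsto (fun n => Y (u n) ω) atTop (𝓝 L) := hL.comp hu_tendsto
    have hZn : Tendsto (fun n => (T' - u n)⁻¹ * (Y (u n) ω - Y T' ω)) atTop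
        (𝓝 ((T' - t)⁻¹ * (L - Y T' ω))) := by
      apply Tendsto.mul
      · exact (tendsto_const_nhds.sub hu_tendsto_nhds).inv₀ hTt.ne'
      · exact hYn.sub tendsto_const_nhds
    have h2' := h2.congr h1
    have hq := tendsto_nhds_unique h2' hZn
    rw [hLlim, hq]
    field_simp
    ring
  -- conditional expectation of the left limit
  have hmeasT' : StronglyMeasurable[ℱ s T'] (Y T') :=
    (hadapt s hs T' hT' (hst.trans htT') T' hT' (Or.inr le_rfl)).stronglyMeasurable
  have hT'conds : P[Y T' | ℱ s T'] = Y T' :=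
    condExp_of_stronglyMeasurable (hle s T') hmeasT' (hint T' hT')
  have hkey_s := key s hs hst
  have htower : P[P[f | ⨆ n, (G n : MeasurableSpace Ω)] | ℱ s T'] =ᵐ[P] P[f | ℱ s T'] :=
    condExp_condExp_of_le hsle hmsup_le
  have hmain : P[(fun ω => Function.leftLim (fun r => Y r ω) t) | ℱ s T']
      =ᵐ[P] fun ω => ((t - s) / (T' - s)) * Y T' ω + ((T' - t) / (T' - s)) * Y s ω := by
    have h1 : P[(fun ω => Function.leftLim (fun r => Y r ω) t) | ℱ s T']
        =ᵐ[P] P[(Y T' + (T' - t) • P[f | ⨆ n, (G n : MeasurableSpace Ω)]) | ℱ s T'] :=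
      condExp_congr_ae hleft
    have h2 : P[(Y T' + (T' - t) • P[f | ⨆ n, (G n : MeasurableSpace Ω)]) | ℱ s T']
        =ᵐ[P] P[Y T' | ℱ s T']
          + P[(T' - t) • P[f | ⨆ n, (G n : MeasurableSpace Ω)] | ℱ s T'] :=
      condExp_add (hint T' hT') (integrable_condExp.smul _) _
    have h3 : P[(T' - t) • P[f | ⨆ n, (G n : MeasurableSpace Ω)] | ℱ s T']
        =ᵐ[P] (T' - t) • P[P[f | ⨆ n, (G n : MeasurableSpace Ω)] | ℱ s T'] :=
      condExp_smul _ _ _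
    refine (h1.trans h2).trans ?_
    have h0 : T' - s ≠ 0 := hTs.ne'
    filter_upwards [h3, htower, hkey_s] with ω e3 etow ekey
    simp only [Pi.add_apply, hT'conds]
    rw [e3]
    simp only [Pi.smul_apply, smul_eq_mul]
    rw [etow, ekey]
    field_simp
    ring
  exact ⟨hmain, hmain.trans (hharness s hs t ht T' hT' hst htT').symm⟩
end

section
/- Let G be a finite time-like graph, sigma* a full time path of G, and t* a point in the interior of an edge E_{j*k*} of G such that sigma* is a support for t*. Define W_1 = {t_{j*}, t_{k*}} and let G_1 be G with the edge E_{j*k*} removed; inductively, for a vertex t_i in W_m, its descendant set N(t_i) equals {t_i} if t_i is a vertex of sigma*, and otherwise equals the set of the two neighbors of t_i in G_m; set W_{m+1} equal to the union of N(t_i) over t_i in W_m, and let G_{m+1} be obtained from G_m by deleting all vertices of W_m not in W_{m+1} together with all their incident edges. Then for every m: (i) no vertex of W_m that is not a vertex of sigma* has a neighbor in G_m that also lies in W_m; and (ii) every vertex of W_{m+1} that is not a vertex of sigma* has exactly two neighbors in the graph G_{m+1}. -/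
namespace TLG

variable (G : TLG)

/-- `v` is a vertex of the path `l`. -/
def onPath (l : List G.Edge) (v : Fin (G.N + 1)) : Prop :=
  ∃ e ∈ l, e.1.1 = v ∨ e.1.2 = v

/-- A walk in `G` (consecutive vertices joined by an edge of `G`, not necessarily
increasing) all of whose vertices lie in the set `S`. -/
def IsWalkIn (S : Set (Fin (G.N + 1))) (l : List (Fin (G.N + 1))) : Prop :=
  l ≠ [] ∧ (∀ x ∈ l, x ∈ S) ∧
    l.Chain' fun u w => ∃ e ∈ G.edges, (e.1.1 = u ∧ e.1.2 = w) ∨ (e.1.1 = w ∧ e.1.2 = u)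

/-- The vertex set `V*` of the subgraph `G*` determined by a full time path `σ*` and an
edge `e* = E_{j*k*}`: all vertices admitting a walk to `j*` or `k*` containing no vertex
of `σ*`. -/
def suppVstar (σstar : List G.Edge) (estar : G.Edge) : Set (Fin (G.N + 1)) :=
  {v | ∃ l : List (Fin (G.N + 1)), G.IsWalkIn {x | ¬ G.onPath σstar x} l ∧
    l.head? = some v ∧ (l.getLast? = some estar.1.1 ∨ l.getLast? = some estar.1.2)}

/-- The edge set `E*` of the subgraph `G*`: all edges of `G` with both endpoints in `V*`. -/
def suppEstar (σstar : List G.Edge) (estar : G.Edge) : Set G.Edge :=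
  {e | e ∈ G.edges ∧ e.1.1 ∈ G.suppVstar σstar estar ∧ e.1.2 ∈ G.suppVstar σstar estar}

/-- The full time path `σ*` is a support for (a point in the interior of) the edge `e*` if
the subgraph `G* = (V*, E*)` is a tree, i.e. it is connected and (being a connected finite
multigraph) has exactly one fewer edge than vertices, which is equivalent to acyclicity. -/
def IsSupport (σstar : List G.Edge) (estar : G.Edge) : Prop :=
  G.IsFullTimePath σstar ∧ estar ∈ G.edges ∧
    (∀ u ∈ G.suppVstar σstar estar, ∀ v ∈ G.suppVstar σstar estar,
      ∃ l : List (Fin (G.N + 1)), G.IsWalkIn (G.suppVstar σstar estar) l ∧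
        l.head? = some u ∧ l.getLast? = some v) ∧
    (G.suppEstar σstar estar).ncard + 1 = (G.suppVstar σstar estar).ncard

open Classical in
/-- The neighbors of the vertex `v` with respect to the edge set `E`. -/
noncomputable def nbrs (E : Finset G.Edge) (v : Fin (G.N + 1)) : Finset (Fin (G.N + 1)) :=
  Finset.univ.filter fun w => ∃ e ∈ E, (e.1.1 = v ∧ e.1.2 = w) ∨ (e.1.1 = w ∧ e.1.2 = v)

open Classical in
/-- The set of descendants of a vertex `v ∈ W_m`, relative to the current edge set `E`:
`{v}` itself if `v` is a vertex of `σ*`, and otherwise the neighbors of `v` in `E`. -/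
noncomputable def descend (σstar : List G.Edge) (E : Finset G.Edge) (v : Fin (G.N + 1)) :
    Finset (Fin (G.N + 1)) :=
  if G.onPath σstar v then {v} else G.nbrs E v

/-- The inductive construction of the pairs `(W_m, G_m)`, `m ≥ 1` (indexed here so that
`suppWE σ* e* m` is the pair `(W_{m+1}, G_{m+1})`, with `G_m` recorded via its edge set):
`W_1 = {j*, k*}` and `G_1 = G - e*`; `W_{m+1}` is the union of the descendants of the
vertices of `W_m`, and `G_{m+1}` is `G_m` with all vertices of `W_m` not in `W_{m+1}`,
and all their incident edges, deleted. -/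
noncomputable def suppWE (σstar : List G.Edge) (estar : G.Edge) :
    ℕ → Finset (Fin (G.N + 1)) × Finset G.Edge
  | 0 => ({estar.1.1, estar.1.2}, G.edges.erase estar)
  | m + 1 =>
    let p := suppWE σstar estar m
    let W' := p.1.biUnion (G.descend σstar p.2)
    (W', p.2.filter fun e => ∀ v ∈ p.1, v ∉ W' → e.1.1 ≠ v ∧ e.1.2 ≠ v)

namespace BP
open TLG

variable {G : TLG}

/-- `e` joins `u` and `v` (in either order). -/
def conn (e : G.Edge) (u v : Fin (G.N + 1)) : Prop :=
  (e.1.1 = u ∧ e.1.2 = v) ∨ (e.1.1 = v ∧ e.1.2 = u)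

lemma conn_symm {e : G.Edge} {u v} (h : conn e u v) : conn e v u := h.symm

lemma t_nonneg (x : Fin (G.N + 1)) : 0 ≤ G.t x := G.ht0 ▸ G.hmono (Fin.zero_le x)

lemma t_le_one (x : Fin (G.N + 1)) : G.t x ≤ 1 := G.htN ▸ G.hmono (Fin.le_last x)

lemma edge_ne {e : G.Edge} (he : e ∈ G.edges) : e.1.1 ≠ e.1.2 := by
  intro h
  have := G.hedge e he
  rw [h] at this
  exact lt_irrefl _ this

lemma no_into_zero {e : G.Edge} (he : e ∈ G.edges) : e.1.2 ≠ 0 := by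
  intro h
  have h1 := G.hedge e he
  rw [h, G.ht0] at h1
  exact absurd h1 (not_lt.2 (t_nonneg _))

lemma no_from_last {e : G.Edge} (he : e ∈ G.edges) : e.1.1 ≠ Fin.last G.N := by
  intro h
  have h1 := G.hedge e he
  rw [h, G.htN] at h1
  exact absurd h1 (not_lt.2 (t_le_one _))

lemma zero_ne_last : (0 : Fin (G.N + 1)) ≠ Fin.last G.N := by
  have h := G.hN
  intro hc
  have : (0 : Fin (G.N+1)).val = (Fin.last G.N).val := by rw [hc]
  simp [Fin.last] at this
  omega

lemma deg_three {v : Fin (G.N + 1)} (h0 : v ≠ 0) (hl : v ≠ Fin.last G.N) :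
    (G.edges.filter fun e => e.1.1 = v ∨ e.1.2 = v).card = 3 := by
  rw [G.hdeg]; simp [h0, hl]

lemma deg_one {v : Fin (G.N + 1)} (h : v = 0 ∨ v = Fin.last G.N) :
    (G.edges.filter fun e => e.1.1 = v ∨ e.1.2 = v).card = 1 := by
  rw [G.hdeg]; simp [h]

section Sigma

variable {σs : List G.Edge}

lemma mem_onPath {f : G.Edge} (hf : f ∈ σs) :
    G.onPath σs f.1.1 ∧ G.onPath σs f.1.2 :=
  ⟨⟨f, hf, Or.inl rfl⟩, ⟨f, hf, Or.inr rfl⟩⟩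

lemma P_zero (hσ : G.IsFullTimePath σs) : G.onPath σs 0 := by
  obtain ⟨h, hh, hh0⟩ := Option.map_eq_some_iff.1 hσ.2.1
  exact ⟨h, List.mem_of_mem_head? (by simp [hh]), Or.inl hh0⟩

lemma P_last (hσ : G.IsFullTimePath σs) : G.onPath σs (Fin.last G.N) := by
  obtain ⟨h, hh, hh0⟩ := Option.map_eq_some_iff.1 hσ.2.2
  exact ⟨h, List.mem_of_mem_getLast? (by simp [hh]), Or.inr hh0⟩

private lemma aux_prev : ∀ {l : List G.Edge}, l.Chain' (fun e f => e.1.2 = f.1.1) →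
    ∀ e ∈ l, (∃ h, l.head? = some h ∧ e.1.1 = h.1.1) ∨ ∃ f ∈ l, f.1.2 = e.1.1 := by
  intro l
  induction l with
  | nil => simp
  | cons a l ih =>
    intro hch e he
    rcases List.mem_cons.1 he with rfl | he'
    · exact Or.inl ⟨e, rfl, rfl⟩
    · match l, he' with
      | b :: l', he' =>
        have hab : a.1.2 = b.1.1 := (List.isChain_cons.1 hch).1 b rfl
        have hch' := (List.isChain_cons.1 hch).2
        rcases ih hch' e he' with ⟨h, hh, h1⟩ | ⟨f, hf, h1⟩
        · simp only [List.head?_cons, Option.some_inj] at hh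
          subst hh
          exact Or.inr ⟨a, List.mem_cons_self, by rw [hab, h1]⟩
        · exact Or.inr ⟨f, List.mem_cons_of_mem _ hf, h1⟩

private lemma aux_next : ∀ {l : List G.Edge}, l.Chain' (fun e f => e.1.2 = f.1.1) →
    ∀ e ∈ l, (∃ h, l.getLast? = some h ∧ e.1.2 = h.1.2) ∨ ∃ f ∈ l, f.1.1 = e.1.2 := by
  intro l
  induction l with
  | nil => simp
  | cons a l ih =>
    intro hch e he
    match l with
    | [] =>
      rcases List.mem_cons.1 he with rfl | he'
      · exact Or.inl ⟨e, rfl, rfl⟩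
      · simp at he'
    | b :: l' =>
      have hab : a.1.2 = b.1.1 := (List.isChain_cons.1 hch).1 b rfl
      have hch' := (List.isChain_cons.1 hch).2
      rcases List.mem_cons.1 he with rfl | he'
      · exact Or.inr ⟨b, List.mem_cons_of_mem _ (List.mem_cons_self), hab.symm⟩
      · rcases ih hch' e he' with ⟨h, hh, h1⟩ | ⟨f, hf, h1⟩
        · exact Or.inl ⟨h, by rw [List.getLast?_cons_cons]; exact hh, h1⟩
        · exact Or.inr ⟨f, List.mem_cons_of_mem _ hf, h1⟩

/-- An interior vertex of `σ*` has both an incoming and an outgoing `σ*`-edge. -/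
lemma two_sigma_edges (hσ : G.IsFullTimePath σs) {w : Fin (G.N + 1)}
    (hw : G.onPath σs w) (h0 : w ≠ 0) (hl : w ≠ Fin.last G.N) :
    ∃ a b, a ∈ σs ∧ b ∈ σs ∧ a.1.2 = w ∧ b.1.1 = w := by
  obtain ⟨e, he, hie⟩ := hw
  have hch := hσ.1.2.2
  rcases hie with h1 | h2
  · -- w = e.1.1 : e is an out-edge; find an in-edge
    rcases aux_prev hch e he with ⟨h, hh, hh1⟩ | ⟨f, hf, hf1⟩
    · -- e.1.1 = head.1.1 = 0, contradiction
      exfalso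
      apply h0
      have : G.pathStart σs = some 0 := hσ.2.1
      unfold TLG.pathStart at this
      rw [hh] at this
      simp at this
      rw [← h1, hh1, this]
    · exact ⟨f, e, hf, he, by rw [hf1, h1], h1⟩
  · -- w = e.1.2 : e is an in-edge; find an out-edge
    rcases aux_next hch e he with ⟨h, hh, hh1⟩ | ⟨f, hf, hf1⟩
    · exfalso
      apply hl
      have : G.pathEnd σs = some (Fin.last G.N) := hσ.2.2
      unfold TLG.pathEnd at this
      rw [hh] at this
      simp at this
      rw [← h2, hh1, this]
    · exact ⟨e, f, he, hf, h2, by rw [hf1, h2]⟩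

/-- Key uniqueness: a vertex on `σ*` has at most one incident edge possessing an
endpoint not on `σ*`. -/
lemma offedge_unique (hσ : G.IsFullTimePath σs) {w : Fin (G.N + 1)}
    (hw : G.onPath σs w) {e e' : G.Edge} (he : e ∈ G.edges) (he' : e' ∈ G.edges)
    (hie : e.1.1 = w ∨ e.1.2 = w) (hie' : e'.1.1 = w ∨ e'.1.2 = w)
    (hoe : ¬ G.onPath σs e.1.1 ∨ ¬ G.onPath σs e.1.2)
    (hoe' : ¬ G.onPath σs e'.1.1 ∨ ¬ G.onPath σs e'.1.2) : e = e' := by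
  have hP : ∀ f ∈ σs, G.onPath σs f.1.1 ∧ G.onPath σs f.1.2 := fun f hf => mem_onPath hf
  -- first, rule out w = 0 and w = last
  by_cases h0 : w = 0
  · exfalso
    subst h0
    obtain ⟨h, hh, hh0⟩ := Option.map_eq_some_iff.1 hσ.2.1
    have hhmem : h ∈ σs := List.mem_of_mem_head? (by simp [hh])
    have hhe : h ∈ G.edges := hσ.1.2.1 h hhmem
    have hie0 : e.1.1 = 0 := by
      rcases hie with h1 | h2
      · exact h1
      · exact absurd h2 (no_into_zero he)
    -- degree of 0 is 1
    have hcard := deg_one (G := G) (Or.inl rfl)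
    have hmem1 : e ∈ G.edges.filter fun f => f.1.1 = 0 ∨ f.1.2 = 0 :=
      Finset.mem_filter.2 ⟨he, Or.inl hie0⟩
    have hmem2 : h ∈ G.edges.filter fun f => f.1.1 = 0 ∨ f.1.2 = 0 :=
      Finset.mem_filter.2 ⟨hhe, Or.inl hh0⟩
    have heqh : e = h := Finset.card_le_one.1 (le_of_eq hcard) _ hmem1 _ hmem2
    subst heqh
    rcases hoe with h | h
    · exact h (hP e hhmem).1
    · exact h (hP e hhmem).2
  by_cases hl : w = Fin.last G.N
  · exfalso
    subst hl
    obtain ⟨h, hh, hh0⟩ := Option.map_eq_some_iff.1 hσ.2.2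
    have hhmem : h ∈ σs := List.mem_of_mem_getLast? (by simp [hh])
    have hhe : h ∈ G.edges := hσ.1.2.1 h hhmem
    have hie0 : e.1.2 = Fin.last G.N := by
      rcases hie with h1 | h2
      · exact absurd h1 (no_from_last he)
      · exact h2
    have hcard := deg_one (G := G) (Or.inr rfl)
    have hmem1 : e ∈ G.edges.filter fun f => f.1.1 = Fin.last G.N ∨ f.1.2 = Fin.last G.N :=
      Finset.mem_filter.2 ⟨he, Or.inr hie0⟩
    have hmem2 : h ∈ G.edges.filter fun f => f.1.1 = Fin.last G.N ∨ f.1.2 = Fin.last G.N :=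
      Finset.mem_filter.2 ⟨hhe, Or.inr hh0⟩
    have heqh : e = h := Finset.card_le_one.1 (le_of_eq hcard) _ hmem1 _ hmem2
    subst heqh
    rcases hoe with h | h
    · exact h (hP e hhmem).1
    · exact h (hP e hhmem).2
  -- interior case
  obtain ⟨a, b, ha, hb, ha2, hb1⟩ := two_sigma_edges hσ hw h0 hl
  have hae : a ∈ G.edges := hσ.1.2.1 a ha
  have hbe : b ∈ G.edges := hσ.1.2.1 b hb
  have hab : a ≠ b := by
    intro hc
    subst hc
    have := G.hedge a hae
    rw [ha2, hb1] at this
    exact lt_irrefl _ this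
  set F := G.edges.filter fun f => f.1.1 = w ∨ f.1.2 = w with hF
  have hcard : F.card = 3 := deg_three h0 hl
  have haF : a ∈ F := Finset.mem_filter.2 ⟨hae, Or.inr ha2⟩
  have hbF : b ∈ F := Finset.mem_filter.2 ⟨hbe, Or.inl hb1⟩
  have heF : e ∈ F := Finset.mem_filter.2 ⟨he, hie⟩
  have heF' : e' ∈ F := Finset.mem_filter.2 ⟨he', hie'⟩
  have hea : e ≠ a := by
    intro hc; subst hc
    rcases hoe with h | h
    · exact h (hP e ha).1
    · exact h (hP e ha).2
  have heb : e ≠ b := by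
    intro hc; subst hc
    rcases hoe with h | h
    · exact h (hP e hb).1
    · exact h (hP e hb).2
  have hea' : e' ≠ a := by
    intro hc; subst hc
    rcases hoe' with h | h
    · exact h (hP e' ha).1
    · exact h (hP e' ha).2
  have heb' : e' ≠ b := by
    intro hc; subst hc
    rcases hoe' with h | h
    · exact h (hP e' hb).1
    · exact h (hP e' hb).2
  by_contra hee
  have hsub : ({a, b, e, e'} : Finset G.Edge) ⊆ F := by
    intro x hx
    simp only [Finset.mem_insert, Finset.mem_singleton] at hx
    rcases hx with rfl | rfl | rfl | rfl <;> assumption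
  have hc4 : ({a, b, e, e'} : Finset G.Edge).card = 4 := by
    rw [Finset.card_insert_of_notMem (by simp [hab, hea.symm, hea'.symm]),
        Finset.card_insert_of_notMem (by simp [heb.symm, heb'.symm]),
        Finset.card_insert_of_notMem (by simp [hee]),
        Finset.card_singleton]
  have hle := Finset.card_le_card hsub
  rw [hc4, hcard] at hle
  omega

end Sigma

end BP
namespace BP
open TLG

variable {G : TLG} {σs : List G.Edge} {es : G.Edge}

/-- The roots: endpoints of `e*` not lying on `σ*`. -/
def Rt (σs : List G.Edge) (es : G.Edge) : Set (Fin (G.N + 1)) :=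
  {v | (v = es.1.1 ∨ v = es.1.2) ∧ ¬ G.onPath σs v}

/-- The tree edges: `E* - e*`. -/
def TE (σs : List G.Edge) (es : G.Edge) : Set G.Edge :=
  G.suppEstar σs es \ {es}

/-- `TR n v`: `v` is joined to a root by a `TE`-walk of length `n`. -/
def TR (σs : List G.Edge) (es : G.Edge) : ℕ → Fin (G.N + 1) → Prop
  | 0, v => v ∈ Rt σs es
  | n + 1, v => ∃ u e, TR σs es n u ∧ e ∈ TE σs es ∧ conn e u v

/-- The level of a vertex: distance to the roots in the tree. -/
noncomputable def lev (σs : List G.Edge) (es : G.Edge) (v : Fin (G.N + 1)) : ℕ :=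
  sInf {n | TR σs es n v}

lemma Vs_notP {v} (hv : v ∈ G.suppVstar σs es) : ¬ G.onPath σs v := by
  obtain ⟨l, ⟨hne, hS, _⟩, hh, _⟩ := hv
  exact hS v (List.mem_of_mem_head? (by simp [hh]))

lemma root_mem_Vs {v} (hv : v ∈ Rt σs es) : v ∈ G.suppVstar σs es := by
  refine ⟨[v], ⟨by simp, by simpa using hv.2, List.isChain_singleton _⟩, by simp, ?_⟩
  rcases hv.1 with h | h
  · exact Or.inl (by simp [h])
  · exact Or.inr (by simp [h])

lemma Vs_extend {v w} (hv : v ∈ G.suppVstar σs es) (hw : ¬ G.onPath σs w)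
    {e : G.Edge} (he : e ∈ G.edges) (hc : conn e v w) : w ∈ G.suppVstar σs es := by
  obtain ⟨l, ⟨hne, hS, hch⟩, hh, hlast⟩ := hv
  refine ⟨w :: l, ⟨by simp, ?_, ?_⟩, by simp, ?_⟩
  · intro x hx
    rcases List.mem_cons.1 hx with rfl | hx'
    · exact hw
    · exact hS x hx'
  · rw [List.Chain', List.isChain_cons]
    refine ⟨?_, hch⟩
    intro y hy
    obtain rfl : v = y := by
      rw [hh] at hy; simpa using hy
    exact ⟨e, he, conn_symm hc⟩
  · match l, hne with
    | x :: l', _ =>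
      rw [List.getLast?_cons_cons] at *
      exact hlast

lemma TR_mem_Vs {n v} (h : TR σs es n v) : v ∈ G.suppVstar σs es := by
  induction n generalizing v with
  | zero => exact root_mem_Vs h
  | succ n ih =>
    obtain ⟨u, e, _, heTE, hc⟩ := h
    rcases hc with ⟨h1, h2⟩ | ⟨h1, h2⟩
    · exact h2 ▸ heTE.1.2.2
    · exact h1 ▸ heTE.1.2.1

lemma TR_nonempty_of_TR {n v} (h : TR σs es n v) : {n | TR σs es n v}.Nonempty := ⟨n, h⟩

lemma lev_le {n v} (h : TR σs es n v) : lev σs es v ≤ n := Nat.sInf_le h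

lemma TR_lev {v} (h : {n | TR σs es n v}.Nonempty) : TR σs es (lev σs es v) v :=
  Nat.sInf_mem h

lemma lev_root {v} (h : v ∈ Rt σs es) : lev σs es v = 0 :=
  Nat.le_zero.1 (lev_le (show TR σs es 0 v from h))

lemma lev_step {u v} (hu : {n | TR σs es n u}.Nonempty) {e : G.Edge}
    (he : e ∈ TE σs es) (hc : conn e u v) : lev σs es v ≤ lev σs es u + 1 :=
  lev_le ⟨u, e, TR_lev hu, he, hc⟩

/-- Every vertex of `V*` is joined to a root by a tree walk. -/
lemma Vs_reach {v} (hv : v ∈ G.suppVstar σs es) : ∃ n, TR σs es n v := by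
  classical
  obtain ⟨l, ⟨hne, hS, hch⟩, hh, hlast⟩ := hv
  -- work with the reversed list
  set l' := l.reverse with hl'
  have hS' : ∀ x ∈ l', ¬ G.onPath σs x := by
    intro x hx; exact hS x (List.mem_reverse.1 hx)
  have hch' : l'.Chain' fun u w => ∃ e ∈ G.edges, conn e u w := by
    rw [hl', List.Chain', List.isChain_reverse]
    apply hch.imp
    intro u w ⟨e, he, hc⟩
    exact ⟨e, he, conn_symm hc⟩
  have hh' : ∃ r, l'.head? = some r ∧ r ∈ Rt σs es := by
    rcases hlast with h | h
    · refine ⟨es.1.1, by rw [hl', List.head?_reverse]; exact h, Or.inl rfl, ?_⟩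
      exact hS _ (List.mem_of_mem_getLast? (by simp [h]))
    · refine ⟨es.1.2, by rw [hl', List.head?_reverse]; exact h, Or.inr rfl, ?_⟩
      exact hS _ (List.mem_of_mem_getLast? (by simp [h]))
  obtain ⟨r, hr, hrR⟩ := hh'
  have hvmem : v ∈ l' := List.mem_reverse.2 (List.mem_of_mem_head? (by simp [hh]))
  -- main claim by induction on l'
  have main : ∀ (L : List (Fin (G.N + 1))), (∀ x ∈ L, ¬ G.onPath σs x) →
      (L.Chain' fun u w => ∃ e ∈ G.edges, conn e u w) →
      ∀ a, L.head? = some a → (∃ n, TR σs es n a) → ∀ x ∈ L, ∃ n, TR σs es n x := by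
    intro L
    induction L with
    | nil => simp
    | cons a L ih =>
      intro hSL hchL a' ha' haR x hx
      obtain rfl : a = a' := by simpa using ha'
      rcases List.mem_cons.1 hx with rfl | hx'
      · exact haR
      · match L, hx' with
        | b :: L', hx' =>
          obtain ⟨e, he, hc⟩ := (List.isChain_cons.1 hchL).1 b rfl
          have hbP : ¬ G.onPath σs b := hSL b (by simp)
          -- b is reachable
          have hbR : ∃ n, TR σs es n b := by
            obtain ⟨n, hn⟩ := haR
            have haVs : a ∈ G.suppVstar σs es := TR_mem_Vs hn
            have hbVs : b ∈ G.suppVstar σs es := Vs_extend haVs hbP he hc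
            by_cases hee : e = es
            · -- b is an endpoint of estar, hence a root
              subst hee
              refine ⟨0, ?_, hbP⟩
              rcases hc with ⟨h1, h2⟩ | ⟨h1, h2⟩
              · exact Or.inr h2.symm
              · exact Or.inl h1.symm
            · have heTE : e ∈ TE σs es := by
                refine ⟨⟨he, ?_, ?_⟩, hee⟩
                · rcases hc with ⟨h1, h2⟩ | ⟨h1, h2⟩
                  · exact h1 ▸ haVs
                  · exact h1 ▸ hbVs
                · rcases hc with ⟨h1, h2⟩ | ⟨h1, h2⟩
                  · exact h2 ▸ hbVs
                  · exact h2 ▸ haVs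
              exact ⟨n + 1, a, e, hn, heTE, hc⟩
          exact ih (fun y hy => hSL y (List.mem_cons_of_mem _ hy))
            (List.isChain_cons.1 hchL).2 b rfl hbR x hx'
  exact main l' hS' hch' r hr ⟨0, hrR⟩ v hvmem

lemma lev_eq_zero_iff {v} (hv : v ∈ G.suppVstar σs es) :
    lev σs es v = 0 ↔ v ∈ Rt σs es := by
  constructor
  · intro h
    have := TR_lev (v := v) (Vs_reach hv |>.imp fun n hn => hn)
    rw [h] at this
    exact this
  · exact lev_root

/-- A vertex at level `n+1` has a parent at level `n`. -/
lemma lev_parent {v n} (hv : v ∈ G.suppVstar σs es) (hn : lev σs es v = n + 1) :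
    ∃ u e, u ∈ G.suppVstar σs es ∧ lev σs es u = n ∧ e ∈ TE σs es ∧ conn e u v := by
  have hTR := TR_lev (v := v) (Vs_reach hv)
  rw [hn] at hTR
  obtain ⟨u, e, hu, he, hc⟩ := hTR
  have h1 : lev σs es u ≤ n := lev_le hu
  have h2 : lev σs es v ≤ lev σs es u + 1 := lev_step ⟨n, hu⟩ he hc
  rw [hn] at h2
  exact ⟨u, e, TR_mem_Vs hu, by omega, he, hc⟩

end BP
namespace BP
open TLG

variable {G : TLG} {σs : List G.Edge} {es : G.Edge}

lemma conn_conn {e : G.Edge} {u v u' v'} (h : conn e u v) (h' : conn e u' v') :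
    (u = u' ∧ v = v') ∨ (u = v' ∧ v = u') := by
  rcases h with ⟨h1, h2⟩ | ⟨h1, h2⟩ <;> rcases h' with ⟨h3, h4⟩ | ⟨h3, h4⟩
  · exact Or.inl ⟨h1.symm.trans h3, h2.symm.trans h4⟩
  · exact Or.inr ⟨h1.symm.trans h3, h2.symm.trans h4⟩
  · exact Or.inr ⟨h2.symm.trans h4, h1.symm.trans h3⟩
  · exact Or.inl ⟨h2.symm.trans h4, h1.symm.trans h3⟩

open Classical in
/-- The parent edge of a non-root vertex of `V*`. -/
noncomputable def pe (σs : List G.Edge) (es : G.Edge) (v : Fin (G.N + 1)) : G.Edge :=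
  if h : ∃ e, e ∈ TE σs es ∧ ∃ u, conn e u v ∧ u ∈ G.suppVstar σs es ∧
      lev σs es v = lev σs es u + 1 then h.choose else default

lemma pe_spec {v} (hv : v ∈ G.suppVstar σs es) (hvR : v ∉ Rt σs es) :
    pe σs es v ∈ TE σs es ∧ ∃ u, conn (pe σs es v) u v ∧ u ∈ G.suppVstar σs es ∧
      lev σs es v = lev σs es u + 1 := by
  have hlev : lev σs es v ≠ 0 := fun h => hvR ((lev_eq_zero_iff hv).1 h)
  obtain ⟨n, hn⟩ : ∃ n, lev σs es v = n + 1 := ⟨lev σs es v - 1, by omega⟩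
  obtain ⟨u, e, hu, hlu, hTE, hc⟩ := lev_parent hv hn
  have hex : ∃ e, e ∈ TE σs es ∧ ∃ u, conn e u v ∧ u ∈ G.suppVstar σs es ∧
      lev σs es v = lev σs es u + 1 := ⟨e, hTE, u, hc, hu, by omega⟩
  rw [pe, dif_pos hex]
  exact hex.choose_spec

lemma pe_injOn : Set.InjOn (pe σs es) (G.suppVstar σs es \ Rt σs es) := by
  intro a ha b hb hab
  obtain ⟨hTEa, ua, hca, hua, hla⟩ := pe_spec ha.1 ha.2
  obtain ⟨hTEb, ub, hcb, hub, hlb⟩ := pe_spec hb.1 hb.2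
  rw [hab] at hca
  rcases conn_conn hca hcb with ⟨h1, h2⟩ | ⟨h1, h2⟩
  · exact h2
  · -- ua = b, a = ub : level contradiction
    rw [← h2] at hlb
    rw [h1] at hla
    omega

lemma not_P_both (hsupp : G.IsSupport σs es) :
    ¬ (G.onPath σs es.1.1 ∧ G.onPath σs es.1.2) := by
  rintro ⟨h1, h2⟩
  have hVs : G.suppVstar σs es = ∅ := by
    ext v
    simp only [Set.mem_empty_iff_false, iff_false]
    rintro ⟨l, ⟨hne, hS, hch⟩, hh, hlast⟩
    rcases hlast with h | h
    · exact hS _ (List.mem_of_mem_getLast? (by simp [h])) h1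
    · exact hS _ (List.mem_of_mem_getLast? (by simp [h])) h2
  have hEs : G.suppEstar σs es = ∅ := by
    ext e
    simp only [Set.mem_empty_iff_false, iff_false]
    rintro ⟨_, hv, _⟩
    rw [hVs] at hv
    exact hv
  have := hsupp.2.2.2
  rw [hVs, hEs] at this
  simp at this

lemma ncard_eq (hsupp : G.IsSupport σs es) :
    (G.suppVstar σs es \ Rt σs es).ncard = (TE σs es).ncard := by
  have hcount := hsupp.2.2.2
  have hjk : es.1.1 ≠ es.1.2 := edge_ne hsupp.2.1
  have hRsub : Rt σs es ⊆ G.suppVstar σs es := fun v hv => root_mem_Vs hv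
  have hdiff := Set.ncard_diff hRsub (Set.toFinite _)
  by_cases hPj : G.onPath σs es.1.1 <;> by_cases hPk : G.onPath σs es.1.2
  · exact absurd ⟨hPj, hPk⟩ (not_P_both hsupp)
  · -- P j, ¬ P k : the only root is k
    have hR : Rt σs es = {es.1.2} := by
      ext v
      simp only [Rt, Set.mem_setOf_eq, Set.mem_singleton_iff]
      constructor
      · rintro ⟨h | h, hP⟩
        · exact absurd (h ▸ hPj) hP
        · exact h
      · rintro rfl
        exact ⟨Or.inr rfl, hPk⟩
    have hes : es ∉ G.suppEstar σs es := fun h => (Vs_notP h.2.1) hPj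
    have hTE : TE σs es = G.suppEstar σs es := Set.diff_singleton_eq_self hes
    rw [hR, Set.ncard_singleton] at hdiff
    rw [hR, hdiff, hTE]
    omega
  · -- ¬ P j, P k : the only root is j
    have hR : Rt σs es = {es.1.1} := by
      ext v
      simp only [Rt, Set.mem_setOf_eq, Set.mem_singleton_iff]
      constructor
      · rintro ⟨h | h, hP⟩
        · exact h
        · exact absurd (h ▸ hPk) hP
      · rintro rfl
        exact ⟨Or.inl rfl, hPj⟩
    have hes : es ∉ G.suppEstar σs es := fun h => (Vs_notP h.2.2) hPk
    have hTE : TE σs es = G.suppEstar σs es := Set.diff_singleton_eq_self hes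
    rw [hR, Set.ncard_singleton] at hdiff
    rw [hR, hdiff, hTE]
    omega
  · -- neither on σ* : both roots
    have hR : Rt σs es = {es.1.1, es.1.2} := by
      ext v
      simp only [Rt, Set.mem_setOf_eq, Set.mem_insert_iff, Set.mem_singleton_iff]
      constructor
      · rintro ⟨h, _⟩; exact h
      · rintro (rfl | rfl)
        · exact ⟨Or.inl rfl, hPj⟩
        · exact ⟨Or.inr rfl, hPk⟩
    have hes : es ∈ G.suppEstar σs es :=
      ⟨hsupp.2.1, root_mem_Vs ⟨Or.inl rfl, hPj⟩, root_mem_Vs ⟨Or.inr rfl, hPk⟩⟩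
    have hTE : (TE σs es).ncard = (G.suppEstar σs es).ncard - 1 :=
      Set.ncard_diff_singleton_of_mem hes
    rw [hR, Set.ncard_pair hjk] at hdiff
    rw [hR, hdiff, hTE]
    omega

/-- Every tree edge is the parent edge of a (unique) non-root vertex of `V*`. -/
lemma TE_surj (hsupp : G.IsSupport σs es) {e : G.Edge} (he : e ∈ TE σs es) :
    ∃ c, (c ∈ G.suppVstar σs es ∧ c ∉ Rt σs es) ∧ pe σs es c = e := by
  have himg : pe σs es '' (G.suppVstar σs es \ Rt σs es) ⊆ TE σs es := by
    rintro _ ⟨c, hc, rfl⟩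
    exact (pe_spec hc.1 hc.2).1
  have hcard : (TE σs es).ncard ≤ (pe σs es '' (G.suppVstar σs es \ Rt σs es)).ncard := by
    rw [Set.ncard_image_of_injOn pe_injOn, ncard_eq hsupp]
  have heq := Set.eq_of_subset_of_ncard_le himg hcard (Set.toFinite _)
  rw [← heq] at he
  obtain ⟨c, hc, hce⟩ := he
  exact ⟨c, ⟨hc.1, hc.2⟩, hce⟩

end BP
namespace BP
open TLG

variable {G : TLG} {σs : List G.Edge} {es : G.Edge}

lemma W_zero : (G.suppWE σs es 0).1 = {es.1.1, es.1.2} := rfl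

lemma E_zero : (G.suppWE σs es 0).2 = G.edges.erase es := rfl

lemma W_succ (m : ℕ) : (G.suppWE σs es (m + 1)).1 =
    (G.suppWE σs es m).1.biUnion (G.descend σs (G.suppWE σs es m).2) := rfl

lemma E_succ (m : ℕ) : (G.suppWE σs es (m + 1)).2 =
    (G.suppWE σs es m).2.filter fun e => ∀ v ∈ (G.suppWE σs es m).1,
      v ∉ (G.suppWE σs es m).1.biUnion (G.descend σs (G.suppWE σs es m).2) →
        e.1.1 ≠ v ∧ e.1.2 ≠ v := rfl

lemma mem_nbrs {E : Finset G.Edge} {v w : Fin (G.N + 1)} :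
    w ∈ G.nbrs E v ↔ ∃ e ∈ E, conn e v w := by
  simp [TLG.nbrs, conn]

lemma descend_pos {E : Finset G.Edge} {v} (h : G.onPath σs v) :
    G.descend σs E v = {v} := by
  simp [TLG.descend, h]

lemma descend_neg {E : Finset G.Edge} {v} (h : ¬ G.onPath σs v) :
    G.descend σs E v = G.nbrs E v := by
  simp [TLG.descend, h]

/-- Invariant (a): the non-`σ*` vertices of `W_m` are exactly the level-`m` vertices. -/
def AStat (σs : List G.Edge) (es : G.Edge) (m : ℕ) : Prop :=
  ∀ v, (v ∈ (G.suppWE σs es m).1 ∧ ¬ G.onPath σs v) ↔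
    (v ∈ G.suppVstar σs es ∧ lev σs es v = m)

/-- Invariant (e): characterization of the edge set of `G_m`. -/
def EStat (σs : List G.Edge) (es : G.Edge) (m : ℕ) : Prop :=
  ∀ e, e ∈ (G.suppWE σs es m).2 ↔
    (e ∈ G.edges ∧ e ≠ es ∧ ∀ p, (p = e.1.1 ∨ p = e.1.2) →
      p ∈ G.suppVstar σs es → m ≤ lev σs es p)

/-- Invariant (c): every `G_m`-edge at a `σ*`-vertex of `W_m` has both endpoints on `σ*`. -/
def CStat (σs : List G.Edge) (es : G.Edge) (m : ℕ) : Prop :=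
  ∀ w, w ∈ (G.suppWE σs es m).1 → G.onPath σs w →
    ∀ e ∈ (G.suppWE σs es m).2, (e.1.1 = w ∨ e.1.2 = w) →
      G.onPath σs e.1.1 ∧ G.onPath σs e.1.2

lemma A_zero : AStat (G := G) σs es 0 := by
  intro v
  rw [W_zero]
  constructor
  · rintro ⟨hv, hP⟩
    have hvR : v ∈ Rt σs es := by
      refine ⟨?_, hP⟩
      simpa using hv
    exact ⟨root_mem_Vs hvR, lev_root hvR⟩
  · rintro ⟨hv, hlev⟩
    have hvR : v ∈ Rt σs es := (lev_eq_zero_iff hv).1 hlev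
    exact ⟨by simpa using hvR.1, hvR.2⟩

lemma E_zero' : EStat (G := G) σs es 0 := by
  intro e
  rw [E_zero, Finset.mem_erase]
  constructor
  · rintro ⟨hne, he⟩
    exact ⟨he, hne, fun p _ _ => Nat.zero_le _⟩
  · rintro ⟨he, hne, _⟩
    exact ⟨hne, he⟩

lemma C_zero (hsupp : G.IsSupport σs es) : CStat (G := G) σs es 0 := by
  have hσ := hsupp.1
  intro w hw hPw e he hie
  rw [E_zero, Finset.mem_erase] at he
  rw [W_zero] at hw
  have hwjk : w = es.1.1 ∨ w = es.1.2 := by simpa using hw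
  by_cases hPf : G.onPath σs e.1.1
  · by_cases hPs : G.onPath σs e.1.2
    · exact ⟨hPf, hPs⟩
    · exfalso
      refine he.1 (offedge_unique hσ hPw he.2 hsupp.2.1 hie ?_ (Or.inr hPs) ?_)
      · rcases hwjk with h | h
        · exact Or.inl h.symm
        · exact Or.inr h.symm
      · rcases hwjk with h | h
        · subst h
          rcases not_and_or.1 (not_P_both hsupp) with h' | h'
          · exact absurd hPw h'
          · exact Or.inr h'
        · subst h
          rcases not_and_or.1 (not_P_both hsupp) with h' | h'
          · exact Or.inl h'
          · exact absurd hPw h'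
  · exfalso
    refine he.1 (offedge_unique hσ hPw he.2 hsupp.2.1 hie ?_ (Or.inl hPf) ?_)
    · rcases hwjk with h | h
      · exact Or.inl h.symm
      · exact Or.inr h.symm
    · rcases hwjk with h | h
      · subst h
        rcases not_and_or.1 (not_P_both hsupp) with h' | h'
        · exact absurd hPw h'
        · exact Or.inr h'
      · subst h
        rcases not_and_or.1 (not_P_both hsupp) with h' | h'
        · exact Or.inl h'
        · exact absurd hPw h'

lemma A_step (hsupp : G.IsSupport σs es) {m : ℕ}
    (hA : AStat (G := G) σs es m) (hE : EStat (G := G) σs es m) :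
    AStat (G := G) σs es (m + 1) := by
  intro v
  rw [W_succ]
  constructor
  · rintro ⟨hv, hPv⟩
    obtain ⟨x, hxW, hxd⟩ := Finset.mem_biUnion.1 hv
    by_cases hPx : G.onPath σs x
    · rw [descend_pos hPx] at hxd
      have : v = x := by simpa using hxd
      exact absurd (this ▸ hPx) hPv
    · rw [descend_neg hPx] at hxd
      obtain ⟨e, heE, hce⟩ := mem_nbrs.1 hxd
      obtain ⟨hxV, hxl⟩ := (hA x).1 ⟨hxW, hPx⟩
      obtain ⟨hee, hnes, hlevcond⟩ := (hE e).1 heE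
      have hvV : v ∈ G.suppVstar σs es := Vs_extend hxV hPv hee hce
      have heTE : e ∈ TE σs es := by
        refine ⟨⟨hee, ?_, ?_⟩, hnes⟩
        · rcases hce with ⟨h1, h2⟩ | ⟨h1, h2⟩
          · exact h1 ▸ hxV
          · exact h1 ▸ hvV
        · rcases hce with ⟨h1, h2⟩ | ⟨h1, h2⟩
          · exact h2 ▸ hvV
          · exact h2 ▸ hxV
      obtain ⟨c, hc, hpc⟩ := TE_surj hsupp heTE
      obtain ⟨_, u, hcu, huV, hclev⟩ := pe_spec hc.1 hc.2
      rw [hpc] at hcu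
      rcases conn_conn hce (conn_symm hcu) with ⟨h1, h2⟩ | ⟨h1, h2⟩
      · -- x = c, v = u : impossible by level bound
        exfalso
        have hvl := hlevcond v (by
          rcases hce with ⟨_, h⟩ | ⟨h, _⟩
          · exact Or.inr h.symm
          · exact Or.inl h.symm) hvV
        rw [← h1] at hclev
        rw [← h2] at hclev
        omega
      · -- x = u, v = c
        rw [← h2] at hclev
        rw [← h1] at hclev
        rw [hxl] at hclev
        exact ⟨hvV, hclev⟩
  · rintro ⟨hvV, hvl⟩
    have hPv : ¬ G.onPath σs v := Vs_notP hvV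
    obtain ⟨u, e, huV, hul, heTE, hcu⟩ := lev_parent hvV hvl
    have huW : u ∈ (G.suppWE σs es m).1 := ((hA u).2 ⟨huV, hul⟩).1
    have hPu : ¬ G.onPath σs u := Vs_notP huV
    have heE : e ∈ (G.suppWE σs es m).2 := by
      refine (hE e).2 ⟨heTE.1.1, heTE.2, ?_⟩
      intro p hp hpV
      have : p = u ∨ p = v := by
        rcases hcu with ⟨h1, h2⟩ | ⟨h1, h2⟩ <;> rcases hp with rfl | rfl
        · exact Or.inl h1
        · exact Or.inr h2
        · exact Or.inr h1
        · exact Or.inl h2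
      rcases this with rfl | rfl
      · omega
      · omega
    refine ⟨Finset.mem_biUnion.2 ⟨u, huW, ?_⟩, hPv⟩
    rw [descend_neg hPu]
    exact mem_nbrs.2 ⟨e, heE, hcu⟩

lemma E_step {m : ℕ} (hA : AStat (G := G) σs es m) (hE : EStat (G := G) σs es m)
    (hA1 : AStat (G := G) σs es (m + 1)) : EStat (G := G) σs es (m + 1) := by
  intro e
  rw [E_succ, Finset.mem_filter]
  constructor
  · rintro ⟨heE, hfilt⟩
    obtain ⟨hee, hnes, hlev⟩ := (hE e).1 heE
    refine ⟨hee, hnes, ?_⟩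
    intro p hp hpV
    have hge : m ≤ lev σs es p := hlev p hp hpV
    rcases Nat.lt_or_ge (lev σs es p) (m + 1) with hlt | hge'
    · exfalso
      have hpl : lev σs es p = m := by omega
      have hPp : ¬ G.onPath σs p := Vs_notP hpV
      have hpW : p ∈ (G.suppWE σs es m).1 := ((hA p).2 ⟨hpV, hpl⟩).1
      have hpW' : p ∉ (G.suppWE σs es m).1.biUnion
          (G.descend σs (G.suppWE σs es m).2) := by
        intro hmem
        have := ((hA1 p).1 ⟨by rw [W_succ]; exact hmem, hPp⟩).2
        omega
      have := hfilt p hpW hpW'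
      rcases hp with rfl | rfl
      · exact this.1 rfl
      · exact this.2 rfl
    · exact hge'
  · rintro ⟨hee, hnes, hlev⟩
    refine ⟨(hE e).2 ⟨hee, hnes, fun p hp hpV => le_trans (Nat.le_succ m) (hlev p hp hpV)⟩, ?_⟩
    intro x hxW hxW'
    constructor
    · intro hx
      by_cases hPx : G.onPath σs x
      · exact hxW' (Finset.mem_biUnion.2 ⟨x, hxW, by rw [descend_pos hPx]; simp⟩)
      · obtain ⟨hxV, hxl⟩ := (hA x).1 ⟨hxW, hPx⟩
        have := hlev x (Or.inl hx.symm) hxV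
        omega
    · intro hx
      by_cases hPx : G.onPath σs x
      · exact hxW' (Finset.mem_biUnion.2 ⟨x, hxW, by rw [descend_pos hPx]; simp⟩)
      · obtain ⟨hxV, hxl⟩ := (hA x).1 ⟨hxW, hPx⟩
        have := hlev x (Or.inr hx.symm) hxV
        omega

lemma C_step (hsupp : G.IsSupport σs es) {m : ℕ}
    (hA : AStat (G := G) σs es m) (hE : EStat (G := G) σs es m)
    (hA1 : AStat (G := G) σs es (m + 1)) (hC : CStat (G := G) σs es m) :
    CStat (G := G) σs es (m + 1) := by
  have hσ := hsupp.1
  intro w hw hPw e he hie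
  have heE : e ∈ (G.suppWE σs es m).2 := by
    rw [E_succ] at he
    exact (Finset.mem_filter.1 he).1
  have hee : e ∈ G.edges := ((hE e).1 heE).1
  rw [W_succ] at hw
  obtain ⟨x, hxW, hxd⟩ := Finset.mem_biUnion.1 hw
  by_cases hPx : G.onPath σs x
  · rw [descend_pos hPx] at hxd
    have hwx : w = x := by simpa using hxd
    subst hwx
    exact hC w hxW hPw e heE hie
  · rw [descend_neg hPx] at hxd
    obtain ⟨g, hgE, hcg⟩ := mem_nbrs.1 hxd
    have hge : g ∈ G.edges := ((hE g).1 hgE).1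
    by_cases hPf : G.onPath σs e.1.1
    · by_cases hPs : G.onPath σs e.1.2
      · exact ⟨hPf, hPs⟩
      · exfalso
        have heg : e = g := offedge_unique hσ hPw hee hge hie
          (by rcases hcg with ⟨h1, h2⟩ | ⟨h1, h2⟩
              · exact Or.inr h2
              · exact Or.inl h1)
          (Or.inr hPs)
          (by rcases hcg with ⟨h1, h2⟩ | ⟨h1, h2⟩
              · exact Or.inl (h1 ▸ hPx)
              · exact Or.inr (h2 ▸ hPx))
        -- but g is removed at stage m+1 since x dies
        obtain ⟨hxV, hxl⟩ := (hA x).1 ⟨hxW, hPx⟩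
        have hxW' : x ∉ (G.suppWE σs es m).1.biUnion
            (G.descend σs (G.suppWE σs es m).2) := by
          intro hmem
          have := ((hA1 x).1 ⟨by rw [W_succ]; exact hmem, hPx⟩).2
          omega
        rw [E_succ] at he
        have hfilt := (Finset.mem_filter.1 he).2 x hxW hxW'
        rw [heg] at hfilt
        rcases hcg with ⟨h1, h2⟩ | ⟨h1, h2⟩
        · exact hfilt.1 h1
        · exact hfilt.2 h2
    · exfalso
      have heg : e = g := offedge_unique hσ hPw hee hge hie
        (by rcases hcg with ⟨h1, h2⟩ | ⟨h1, h2⟩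
            · exact Or.inr h2
            · exact Or.inl h1)
        (Or.inl hPf)
        (by rcases hcg with ⟨h1, h2⟩ | ⟨h1, h2⟩
            · exact Or.inl (h1 ▸ hPx)
            · exact Or.inr (h2 ▸ hPx))
      obtain ⟨hxV, hxl⟩ := (hA x).1 ⟨hxW, hPx⟩
      have hxW' : x ∉ (G.suppWE σs es m).1.biUnion
          (G.descend σs (G.suppWE σs es m).2) := by
        intro hmem
        have := ((hA1 x).1 ⟨by rw [W_succ]; exact hmem, hPx⟩).2
        omega
      rw [E_succ] at he
      have hfilt := (Finset.mem_filter.1 he).2 x hxW hxW'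
      rw [heg] at hfilt
      rcases hcg with ⟨h1, h2⟩ | ⟨h1, h2⟩
      · exact hfilt.1 h1
      · exact hfilt.2 h2

lemma Good (hsupp : G.IsSupport σs es) :
    ∀ m, AStat (G := G) σs es m ∧ EStat (G := G) σs es m ∧ CStat (G := G) σs es m := by
  intro m
  induction m with
  | zero => exact ⟨A_zero, E_zero', C_zero hsupp⟩
  | succ m ih =>
    obtain ⟨hA, hE, hC⟩ := ih
    have hA1 := A_step hsupp hA hE
    exact ⟨hA1, E_step hA hE hA1, C_step hsupp hA hE hA1 hC⟩

end BP
end TLG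

open TLG in
/-- **Lemma (Burdzy–Pal).** Let `σ*` be a support for a point in the interior of the edge
`e*` of a finite TLG `G`, and let `(W_m, G_m)`, `m ≥ 1`, be the associated inductive
construction (here `suppWE σ* e* m = (W_{m+1}, G_{m+1})`).  Then for every `m`:
(i) no vertex of `W_m` that is not a vertex of `σ*` has a neighbor in `G_m` that also lies
in `W_m`; and (ii) every vertex of `W_{m+1}` that is not a vertex of `σ*` has exactly two
neighbors in the graph `G_{m+1}`. -/
theorem support_construction_two_neighbors (G : TLG) (σstar : List G.Edge) (estar : G.Edge)
    (hsupp : G.IsSupport σstar estar) :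
    (∀ m : ℕ, ∀ v ∈ (G.suppWE σstar estar m).1, ¬ G.onPath σstar v →
      ∀ w ∈ (G.suppWE σstar estar m).1,
        ¬ ∃ e ∈ (G.suppWE σstar estar m).2,
            (e.1.1 = v ∧ e.1.2 = w) ∨ (e.1.1 = w ∧ e.1.2 = v)) ∧
    (∀ m : ℕ, ∀ v ∈ (G.suppWE σstar estar (m + 1)).1, ¬ G.onPath σstar v →
      (G.nbrs (G.suppWE σstar estar (m + 1)).2 v).card = 2) := by
  classical
  have hσ := hsupp.1
  constructor
  · -- part (i)
    intro m v hv hPv w hw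
    rintro ⟨e, he, hconn⟩
    obtain ⟨hA, hE, hC⟩ := BP.Good hsupp m
    have hconn' : BP.conn e v w := hconn
    obtain ⟨hvV, hvl⟩ := (hA v).1 ⟨hv, hPv⟩
    by_cases hPw : G.onPath σstar w
    · have hboth := hC w hw hPw e he (by
        rcases hconn' with ⟨h1, h2⟩ | ⟨h1, h2⟩
        · exact Or.inr h2
        · exact Or.inl h1)
      rcases hconn' with ⟨h1, h2⟩ | ⟨h1, h2⟩
      · exact hPv (h1 ▸ hboth.1)
      · exact hPv (h2 ▸ hboth.2)
    · obtain ⟨hwV, hwl⟩ := (hA w).1 ⟨hw, hPw⟩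
      obtain ⟨hee, hnes, _⟩ := (hE e).1 he
      have heTE : e ∈ BP.TE σstar estar := by
        refine ⟨⟨hee, ?_, ?_⟩, hnes⟩
        · rcases hconn' with ⟨h1, _⟩ | ⟨h1, _⟩
          · exact h1 ▸ hvV
          · exact h1 ▸ hwV
        · rcases hconn' with ⟨_, h2⟩ | ⟨_, h2⟩
          · exact h2 ▸ hwV
          · exact h2 ▸ hvV
      obtain ⟨c, hc, hpc⟩ := BP.TE_surj hsupp heTE
      obtain ⟨_, u, hcu, huV, hclev⟩ := BP.pe_spec hc.1 hc.2
      rw [hpc] at hcu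
      rcases BP.conn_conn hconn' (BP.conn_symm hcu) with ⟨h1, h2⟩ | ⟨h1, h2⟩
      · rw [← h1, ← h2, hvl, hwl] at hclev; omega
      · rw [← h1, ← h2, hvl, hwl] at hclev; omega
  · -- part (ii)
    intro m v hv hPv
    obtain ⟨hA1, hE1, _⟩ := BP.Good hsupp (m + 1)
    obtain ⟨hvV, hvl⟩ := (hA1 v).1 ⟨hv, hPv⟩
    have hvR : v ∉ BP.Rt σstar estar := fun h => by
      have := BP.lev_root h; omega
    obtain ⟨hgTE, u, hcu, huV, hulev⟩ := BP.pe_spec hvV hvR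
    set g := BP.pe σstar estar v with hg
    have hv0 : v ≠ 0 := fun h => hPv (h ▸ BP.P_zero hσ)
    have hvlast : v ≠ Fin.last G.N := fun h => hPv (h ▸ BP.P_last hσ)
    set F := G.edges.filter (fun e => e.1.1 = v ∨ e.1.2 = v) with hF
    have hFcard : F.card = 3 := BP.deg_three hv0 hvlast
    have hgF : g ∈ F := Finset.mem_filter.2 ⟨hgTE.1.1, by
      rcases hcu with ⟨h1, h2⟩ | ⟨h1, h2⟩
      · exact Or.inr h2
      · exact Or.inl h1⟩
    have hFe : (F.erase g).card = 2 := by rw [Finset.card_erase_of_mem hgF, hFcard]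
    obtain ⟨e1, e2, h12, herase⟩ := Finset.card_eq_two.1 hFe
    have getw : ∀ e', e' ∈ F.erase g → ∃ w', BP.conn e' v w' ∧
        e' ∈ (G.suppWE σstar estar (m + 1)).2 ∧
        (¬ G.onPath σstar w' → e' = BP.pe σstar estar w') := by
      intro e' he'
      obtain ⟨hne, heF⟩ := Finset.mem_erase.1 he'
      obtain ⟨hee, hinc⟩ := Finset.mem_filter.1 heF
      obtain ⟨w', hcw⟩ : ∃ w', BP.conn e' v w' := by
        rcases hinc with h | h
        · exact ⟨e'.1.2, Or.inl ⟨h, rfl⟩⟩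
        · exact ⟨e'.1.1, Or.inr ⟨rfl, h⟩⟩
      have hnes : e' ≠ estar := by
        intro hc
        subst hc
        refine hvR ⟨?_, hPv⟩
        rcases hcw with ⟨h1, _⟩ | ⟨_, h2⟩
        · exact Or.inl h1.symm
        · exact Or.inr h2.symm
      by_cases hPw : G.onPath σstar w'
      · refine ⟨w', hcw, ?_, fun h => absurd hPw h⟩
        refine (hE1 e').2 ⟨hee, hnes, ?_⟩
        intro p hp hpV
        have hpe : p = v ∨ p = w' := by
          rcases hcw with ⟨h1, h2⟩ | ⟨h1, h2⟩ <;> rcases hp with rfl | rfl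
          · exact Or.inl h1
          · exact Or.inr h2
          · exact Or.inr h1
          · exact Or.inl h2
        rcases hpe with rfl | rfl
        · omega
        · exact absurd hPw (BP.Vs_notP hpV)
      · have hwV : w' ∈ G.suppVstar σstar estar := BP.Vs_extend hvV hPw hee hcw
        have heTE : e' ∈ BP.TE σstar estar := by
          refine ⟨⟨hee, ?_, ?_⟩, hnes⟩
          · rcases hcw with ⟨h1, _⟩ | ⟨h1, _⟩
            · exact h1 ▸ hvV
            · exact h1 ▸ hwV
          · rcases hcw with ⟨_, h2⟩ | ⟨_, h2⟩
            · exact h2 ▸ hwV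
            · exact h2 ▸ hvV
        obtain ⟨c, hc, hpc⟩ := BP.TE_surj hsupp heTE
        obtain ⟨_, u', hcu', hu'V, hclev⟩ := BP.pe_spec hc.1 hc.2
        rw [hpc] at hcu'
        rcases BP.conn_conn hcw (BP.conn_symm hcu') with ⟨h1, h2⟩ | ⟨h1, h2⟩
        · exfalso
          apply hne
          rw [hg, h1]
          exact hpc.symm
        · have hwl : BP.lev σstar estar w' = m + 2 := by
            rw [← h2, ← h1] at hclev
            omega
          refine ⟨w', hcw, ?_, fun _ => by rw [h2]; exact hpc.symm⟩
          refine (hE1 e').2 ⟨hee, hnes, ?_⟩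
          intro p hp hpV
          have hpe : p = v ∨ p = w' := by
            rcases hcw with ⟨h1', h2'⟩ | ⟨h1', h2'⟩ <;> rcases hp with rfl | rfl
            · exact Or.inl h1'
            · exact Or.inr h2'
            · exact Or.inr h1'
            · exact Or.inl h2'
          rcases hpe with rfl | rfl
          · omega
          · omega
    have hgnot : g ∉ (G.suppWE σstar estar (m + 1)).2 := by
      intro hmem
      have := ((hE1 g).1 hmem).2.2 u (by
        rcases hcu with ⟨h1, _⟩ | ⟨_, h2⟩
        · exact Or.inl h1.symm
        · exact Or.inr h2.symm) huV
      omega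
    obtain ⟨w1, hc1, hm1, hp1⟩ := getw e1 (by rw [herase]; simp)
    obtain ⟨w2, hc2, hm2, hp2⟩ := getw e2 (by rw [herase]; simp)
    have he1F : e1 ∈ F := (Finset.mem_erase.1 (by rw [herase]; simp : e1 ∈ F.erase g)).2
    have he2F : e2 ∈ F := (Finset.mem_erase.1 (by rw [herase]; simp : e2 ∈ F.erase g)).2
    have hnbr : G.nbrs (G.suppWE σstar estar (m + 1)).2 v = {w1, w2} := by
      ext x
      rw [BP.mem_nbrs]
      constructor
      · rintro ⟨e, heE, hce⟩
        have heF : e ∈ F := Finset.mem_filter.2 ⟨((hE1 e).1 heE).1, by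
          rcases hce with ⟨h1, _⟩ | ⟨_, h2⟩
          · exact Or.inl h1
          · exact Or.inr h2⟩
        have hneg : e ≠ g := fun h => hgnot (h ▸ heE)
        have hmem : e ∈ F.erase g := Finset.mem_erase.2 ⟨hneg, heF⟩
        rw [herase] at hmem
        simp only [Finset.mem_insert, Finset.mem_singleton] at hmem
        rcases hmem with rfl | rfl
        · rcases BP.conn_conn hce hc1 with ⟨_, h2⟩ | ⟨h1, h2⟩
          · exact Finset.mem_insert.2 (Or.inl h2)
          · exact Finset.mem_insert.2 (Or.inl (h2.trans h1))
        · rcases BP.conn_conn hce hc2 with ⟨_, h2⟩ | ⟨h1, h2⟩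
          · exact Finset.mem_insert.2 (Or.inr (Finset.mem_singleton.2 h2))
          · exact Finset.mem_insert.2 (Or.inr (Finset.mem_singleton.2 (h2.trans h1)))
      · intro hx
        rcases Finset.mem_insert.1 hx with rfl | hx
        · exact ⟨e1, hm1, hc1⟩
        · rw [Finset.mem_singleton] at hx
          subst hx
          exact ⟨e2, hm2, hc2⟩
    have hw12 : w1 ≠ w2 := by
      intro hw
      apply h12
      by_cases hPw : G.onPath σstar w1
      · refine BP.offedge_unique hσ hPw (Finset.mem_filter.1 he1F).1
          (Finset.mem_filter.1 he2F).1 ?_ ?_ ?_ ?_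
        · rcases hc1 with ⟨h1, h2⟩ | ⟨h1, h2⟩
          · exact Or.inr h2
          · exact Or.inl h1
        · rw [hw]
          rcases hc2 with ⟨h1, h2⟩ | ⟨h1, h2⟩
          · exact Or.inr h2
          · exact Or.inl h1
        · rcases hc1 with ⟨h1, _⟩ | ⟨_, h2⟩
          · exact Or.inl (fun hc => hPv (h1 ▸ hc))
          · exact Or.inr (fun hc => hPv (h2 ▸ hc))
        · rcases hc2 with ⟨h1, _⟩ | ⟨_, h2⟩
          · exact Or.inl (fun hc => hPv (h1 ▸ hc))
          · exact Or.inr (fun hc => hPv (h2 ▸ hc))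
      · have hPw2 : ¬ G.onPath σstar w2 := hw ▸ hPw
        rw [hp1 hPw, hp2 hPw2, hw]
    rw [hnbr, Finset.card_insert_of_notMem (by simp [hw12]), Finset.card_singleton]
end
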